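/- arXiv:1802.08407 — 4 statements merged into one kernel-verified Lean document; each statement's English description precedes it below -/
import Mathlib

section
/- Let X be a finite set and let P, Q be probability measures on X. Let x_1,…,x_n be i.i.d. with law P and y_1,…,y_m be i.i.d. with law Q (jointly independent), and let n = n_t, m = m_t be sequences of positive integers tending to infinity with n_t/(n_t+m_t) → c for some c ∈ (0,1). Then for every set Γ of pairs of probability measures on X, limsup_{t→∞} −(1/(n_t+m_t)) · log (P^{⊗n_t} ⊗ Q^{⊗m_t})((P̂_{n_t}, Q̂_{m_t}) ∈ Γ) ≤ inf over (R,S) in the interior of Γ of c·D(R‖P) + (1−c)·D(S‖Q), where the interior is taken in the product topology on the probability simplex over X times itself. -/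
open MeasureTheory Filter Set
open scoped ENNReal NNReal

noncomputable section

/-- The empirical measure of the sample `x = (x 1, …, x n)`:  `(1/n) ∑ i, δ_{x i}`. -/
def empMeas {X : Type*} [MeasurableSpace X] {n : ℕ} (x : Fin n → X) : Measure X :=
  (n : ℝ≥0∞)⁻¹ • ∑ i, Measure.dirac (x i)

lemma empMeas_isProb {X : Type*} [MeasurableSpace X] {n : ℕ} (hn : n ≠ 0) (x : Fin n → X) :
    IsProbabilityMeasure (empMeas x) := by
  constructor
  simp only [empMeas, Measure.smul_apply, Measure.finset_sum_apply, measure_univ,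
    Finset.sum_const, Finset.card_univ, Fintype.card_fin, nsmul_eq_mul, mul_one, smul_eq_mul]
  exact ENNReal.inv_mul_cancel (by exact_mod_cast hn) (ENNReal.natCast_ne_top n)

/-- The empirical measure, as a probability measure (requires `n ≠ 0`). -/
def empProb {X : Type*} [MeasurableSpace X] {n : ℕ} (hn : n ≠ 0) (x : Fin n → X) :
    ProbabilityMeasure X := ⟨empMeas x, empMeas_isProb hn x⟩

open Classical in
/-- Kullback–Leibler divergence `D(R‖P) = ∫ log (dR/dP) dR` if `R ≪ P` (and the integral is
well defined), `+∞` otherwise. -/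
def KL {X : Type*} [MeasurableSpace X] (R P : Measure X) : ℝ≥0∞ :=
  if R ≪ P ∧ Integrable (llr R P) R then ENNReal.ofReal (∫ x, llr R P x ∂ R) else ⊤

/-- Extended-real logarithm of an extended-nonnegative real, with `elog 0 = ⊥`. -/
def elog (x : ℝ≥0∞) : EReal :=
  if x = 0 then ⊥ else if x = ⊤ then ⊤ else ((Real.log x.toReal : ℝ) : EReal)


section Helpers
variable {Y : Type*} [Fintype Y] [MeasurableSpace Y] [MeasurableSingletonClass Y]

lemma measure_eq_sum' (μ : Measure Y) (s : Set Y) :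
    μ s = ∑ y ∈ s.toFinite.toFinset, μ {y} := by
  conv_lhs => rw [show s = ⋃ y ∈ s.toFinite.toFinset, {y} by
    ext z; simp [Set.Finite.mem_toFinset]]
  rw [measure_biUnion_finset ?_ fun b _ => measurableSet_singleton b]
  intro a _ b _ hab
  simp [Function.onFun, Set.disjoint_singleton_left, hab]

lemma sum_toReal_eq_one (μ : Measure Y) [IsProbabilityMeasure μ] :
    ∑ a, (μ {a}).toReal = 1 := by
  have h := measure_eq_sum' μ Set.univ
  rw [measure_univ] at h
  have h2 : ∑ y ∈ Set.univ.toFinite.toFinset, μ {y} = ∑ a : Y, μ {a} :=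
    Finset.sum_congr (by ext a; simp [Set.Finite.mem_toFinset]) fun _ _ => rfl
  rw [← ENNReal.toReal_sum (fun a _ => measure_ne_top μ _), ← h2, ← h, ENNReal.toReal_one]

lemma pi_apply_eq {n : ℕ} (μ : Measure Y) [IsProbabilityMeasure μ] (s : Set (Fin n → Y)) :
    (Measure.pi fun _ : Fin n => μ) s
      = ENNReal.ofReal (∑ x ∈ s.toFinite.toFinset, ∏ i, (μ {x i}).toReal) := by
  rw [measure_eq_sum' _ s, ENNReal.ofReal_sum_of_nonneg
    (fun x _ => Finset.prod_nonneg fun i _ => ENNReal.toReal_nonneg)]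
  refine Finset.sum_congr rfl fun x _ => ?_
  calc (Measure.pi fun _ : Fin n => μ) {x}
      = ∏ i, μ {x i} := by rw [← Set.univ_pi_singleton x, Measure.pi_pi]
    _ = ∏ i, ENNReal.ofReal ((μ {x i}).toReal) := by
        exact Finset.prod_congr rfl fun i _ => (ENNReal.ofReal_toReal (measure_ne_top μ _)).symm
    _ = ENNReal.ofReal (∏ i, (μ {x i}).toReal) :=
        (ENNReal.ofReal_prod_of_nonneg (fun i _ => ENNReal.toReal_nonneg)).symm

omit [MeasurableSpace Y] [MeasurableSingletonClass Y] in
lemma sum_prod_eq {n : ℕ} (F : Fin n → Y → ℝ) :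
    ∑ x : Fin n → Y, ∏ i, F i (x i) = ∏ i, ∑ a, F i a := by
  rw [Finset.prod_univ_sum, Fintype.piFinset_univ]


lemma cheb (μ : Measure Y) [IsProbabilityMeasure μ] (f : Y → ℝ) {ε : ℝ} (hε : 0 < ε)
    {n : ℕ} (hn : 0 < n) :
    (Measure.pi fun _ : Fin n => μ)
        {x : Fin n → Y | ε ≤ |(∑ i, f (x i)) / n - ∑ a, (μ {a}).toReal * f a|}
      ≤ ENNReal.ofReal
          ((∑ a, (μ {a}).toReal * (f a - ∑ b, (μ {b}).toReal * f b) ^ 2) / (n * ε ^ 2)) := by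
  classical
  set m : Y → ℝ := fun a => (μ {a}).toReal with hm
  set c : ℝ := ∑ b, m b * f b with hc
  set g : Y → ℝ := fun a => f a - c with hg
  have hm0 : ∀ a, 0 ≤ m a := fun a => ENNReal.toReal_nonneg
  have hm1 : ∑ a, m a = 1 := sum_toReal_eq_one μ
  have hg0 : ∑ a, m a * g a = 0 := by
    simp only [hg, mul_sub, Finset.sum_sub_distrib, ← Finset.sum_mul, hm1, one_mul, hc, sub_self]
  set V : ℝ := ∑ a, m a * g a ^ 2 with hV
  have hV0 : 0 ≤ V := Finset.sum_nonneg fun a _ => mul_nonneg (hm0 a) (sq_nonneg _)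
  -- key identity
  have inner : ∀ i j : Fin n,
      (∑ x : Fin n → Y, g (x i) * g (x j) * ∏ t, m (x t)) = if i = j then V else 0 := by
    intro i j
    have hrw : ∀ x : Fin n → Y, g (x i) * g (x j) * ∏ t, m (x t)
        = ∏ t, ((if t = i then g (x t) else 1) * (if t = j then g (x t) else 1) * m (x t)) := by
      intro x
      rw [Finset.prod_mul_distrib, Finset.prod_mul_distrib,
        Finset.prod_ite_eq' Finset.univ i (fun t => g (x t)),
        Finset.prod_ite_eq' Finset.univ j (fun t => g (x t))]
      simp
    simp_rw [hrw]
    rw [sum_prod_eq (F := fun t a => ((if t = i then g a else 1) * if t = j then g a else 1) * m a)]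
    by_cases hij : i = j
    · subst hij
      rw [if_pos rfl]
      have : ∀ t : Fin n, (∑ a, (if t = i then g a else 1) * (if t = i then g a else 1) * m a)
          = if t = i then V else 1 := by
        intro t
        by_cases ht : t = i
        · simp only [ht, if_pos rfl, hV]
          exact Finset.sum_congr rfl fun a _ => by simp only [if_true]; ring
        · simp [ht, hm1]
      simp_rw [this]
      rw [Finset.prod_ite_eq' Finset.univ i (fun _ => V), if_pos (Finset.mem_univ i)]
    · rw [if_neg hij]
      apply Finset.prod_eq_zero (Finset.mem_univ i)
      simp only [if_pos rfl, if_neg hij]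
      rw [← hg0]
      exact Finset.sum_congr rfl fun a _ => by simp only [if_true]; ring
  have key : ∑ x : Fin n → Y, (∑ i, g (x i)) ^ 2 * ∏ t, m (x t) = n * V := by
    have expand : ∀ x : Fin n → Y, (∑ i, g (x i)) ^ 2 * ∏ t, m (x t)
        = ∑ i, ∑ j, g (x i) * g (x j) * ∏ t, m (x t) := by
      intro x
      rw [sq, Finset.sum_mul_sum]
      simp_rw [Finset.sum_mul]
    simp_rw [expand]
    rw [Finset.sum_comm]
    have : ∀ i : Fin n, (∑ x : Fin n → Y, ∑ j, g (x i) * g (x j) * ∏ t, m (x t)) = V := by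
      intro i
      rw [Finset.sum_comm]
      simp_rw [inner]
      simp
    simp_rw [this]
    simp [mul_comm]
  -- now the bound
  rw [pi_apply_eq]
  apply ENNReal.ofReal_le_ofReal
  set E : Set (Fin n → Y) := {x | ε ≤ |(∑ i, f (x i)) / n - c|} with hE
  have hprodnn : ∀ x : Fin n → Y, 0 ≤ ∏ i, m (x i) :=
    fun x => Finset.prod_nonneg fun i _ => hm0 _
  have hsq : ∀ x ∈ E.toFinite.toFinset, (n * ε) ^ 2 * ∏ i, m (x i)
      ≤ (∑ i, g (x i)) ^ 2 * ∏ i, m (x i) := by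
    intro x hx
    rw [Set.Finite.mem_toFinset] at hx
    have hsum : (∑ i, f (x i)) / n - c = (∑ i, g (x i)) / n := by
      have : ∑ i, g (x i) = (∑ i, f (x i)) - n * c := by
        simp [hg, Finset.sum_sub_distrib, Finset.card_univ]
      rw [this]
      field_simp
    have h1 : ε ≤ |∑ i, g (x i)| / n := by
      have := hx
      rw [hE, Set.mem_setOf_eq, hsum] at this
      rwa [abs_div, abs_of_pos (by positivity : (0:ℝ) < (n:ℝ))] at this
    have h2 : (n : ℝ) * ε ≤ |∑ i, g (x i)| := by
      have := (le_div_iff₀ (by positivity : (0:ℝ) < (n:ℝ))).1 h1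
      linarith
    have h3 : ((n:ℝ) * ε) ^ 2 ≤ (∑ i, g (x i)) ^ 2 := by
      rw [← sq_abs (∑ i, g (x i))]
      exact pow_le_pow_left₀ (by positivity) h2 2
    exact mul_le_mul_of_nonneg_right h3 (hprodnn x)
  have hstep : ((n:ℝ) * ε) ^ 2 * ∑ x ∈ E.toFinite.toFinset, ∏ i, m (x i) ≤ n * V := by
    rw [Finset.mul_sum]
    calc ∑ x ∈ E.toFinite.toFinset, ((n:ℝ)*ε)^2 * ∏ i, m (x i)
        ≤ ∑ x ∈ E.toFinite.toFinset, (∑ i, g (x i)) ^ 2 * ∏ i, m (x i) :=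
          Finset.sum_le_sum hsq
      _ ≤ ∑ x : Fin n → Y, (∑ i, g (x i)) ^ 2 * ∏ i, m (x i) := by
          apply Finset.sum_le_sum_of_subset_of_nonneg (Finset.subset_univ _)
          intro x _ _
          exact mul_nonneg (sq_nonneg _) (hprodnn x)
      _ = n * V := key
  have hne : ((n:ℝ) * ε) ^ 2 > 0 := by positivity
  calc ∑ x ∈ E.toFinite.toFinset, ∏ i, m (x i)
      ≤ n * V / ((n:ℝ) * ε) ^ 2 := by
        rw [le_div_iff₀ hne, mul_comm]
        exact hstep
    _ = V / (n * ε ^ 2) := by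
        field_simp

/-- KL divergence as a real number, for measures on a fintype -/
def Dreal (R P : Measure Y) : ℝ :=
  ∑ a, (R {a}).toReal * Real.log ((R {a}).toReal / (P {a}).toReal)

lemma empMeas_apply_toReal [DecidableEq Y] {n : ℕ} (hn : 0 < n) (x : Fin n → Y) (a : Y) :
    ((empMeas x) {a}).toReal = (∑ i, (if x i = a then (1:ℝ) else 0)) / n := by
  have h : (empMeas x) {a} = (n : ℝ≥0∞)⁻¹ * ∑ i, (if x i = a then (1:ℝ≥0∞) else 0) := by
    simp only [empMeas, Measure.smul_apply, Measure.finset_sum_apply, smul_eq_mul]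
    congr 1
    refine Finset.sum_congr rfl fun i _ => ?_
    rw [Measure.dirac_apply' _ (measurableSet_singleton a), Set.indicator_apply]
    simp [Set.mem_singleton_iff]
  rw [h, ENNReal.toReal_mul, ENNReal.toReal_inv, ENNReal.toReal_natCast,
    ENNReal.toReal_sum (fun i _ => by split <;> simp)]
  have h2 : ∀ i : Fin n, ((if x i = a then (1:ℝ≥0∞) else 0)).toReal
      = (if x i = a then (1:ℝ) else 0) := fun i => by split <;> simp
  simp_rw [h2]
  rw [inv_mul_eq_div]

set_option maxHeartbeats 1000000 in
lemma lemS (P R : Measure Y) [IsProbabilityMeasure P] [IsProbabilityMeasure R]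
    (hRP : R ≪ P) {δ ε : ℝ} (hδ : 0 < δ) (hε : 0 < ε) :
    ∃ N : ℕ, ∀ n ≥ N, 0 < n →
      ENNReal.ofReal (Real.exp (-(n * (Dreal R P + ε))) / 2)
        ≤ (Measure.pi fun _ : Fin n => P)
            {x : Fin n → Y | ∀ a, |((empMeas x) {a}).toReal - (R {a}).toReal| < δ} := by
  classical
  set f1 : Y → Y → ℝ := fun a0 b => if b = a0 then 1 else 0 with hf1
  set fl : Y → ℝ := fun a =>
    if (R {a}).toReal = 0 then 0 else Real.log ((R {a}).toReal / (P {a}).toReal) with hfl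
  have hmean1 : ∀ a0, ∑ b, (R {b}).toReal * f1 a0 b = (R {a0}).toReal := by
    intro a0
    simp [hf1, mul_ite, mul_one, mul_zero, Finset.sum_ite_eq']
  have hmeanl : ∑ b, (R {b}).toReal * fl b = Dreal R P := by
    refine Finset.sum_congr rfl fun a _ => ?_
    by_cases h : (R {a}).toReal = 0
    · simp [hfl, h]
    · simp [hfl, h]
  set A1 : ℝ := ∑ a0, ∑ a, (R {a}).toReal * (f1 a0 a - ∑ b, (R {b}).toReal * f1 a0 b) ^ 2
    with hA1
  set A2 : ℝ := ∑ a, (R {a}).toReal * (fl a - ∑ b, (R {b}).toReal * fl b) ^ 2 with hA2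
  have hA10 : 0 ≤ A1 := Finset.sum_nonneg fun a _ => Finset.sum_nonneg fun b _ =>
    mul_nonneg ENNReal.toReal_nonneg (sq_nonneg _)
  have hA20 : 0 ≤ A2 := Finset.sum_nonneg fun a _ =>
    mul_nonneg ENNReal.toReal_nonneg (sq_nonneg _)
  set C : ℝ := A1 / δ ^ 2 + A2 / ε ^ 2 with hCdef
  have hC0 : 0 ≤ C :=
    add_nonneg (div_nonneg hA10 (sq_nonneg δ)) (div_nonneg hA20 (sq_nonneg ε))
  refine ⟨max 1 ⌈2 * C⌉₊, fun n hn hn0 => ?_⟩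
  have hn2C : 2 * C ≤ n :=
    le_trans (Nat.le_ceil _) (by exact_mod_cast le_trans (le_max_right _ _) hn)
  have hnR : (0:ℝ) < n := by exact_mod_cast hn0
  -- the good event
  set G : Set (Fin n → Y) := {x | (∀ a, |((empMeas x) {a}).toReal - (R {a}).toReal| < δ)
      ∧ |(∑ i, fl (x i)) / n - Dreal R P| < ε ∧ ∀ i, (R {x i}).toReal ≠ 0} with hG
  -- bound the R-measure of the complement
  have hcompl : (Measure.pi fun _ : Fin n => R) Gᶜ ≤ ENNReal.ofReal (C / n) := by
    set E1 : Y → Set (Fin n → Y) := fun a0 =>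
      {x | δ ≤ |(∑ i, f1 a0 (x i)) / n - ∑ b, (R {b}).toReal * f1 a0 b|} with hE1
    set E2 : Set (Fin n → Y) :=
      {x | ε ≤ |(∑ i, fl (x i)) / n - ∑ b, (R {b}).toReal * fl b|} with hE2
    set E3 : Set (Fin n → Y) := {x | ∃ i, (R {x i}).toReal = 0} with hE3
    have hsub : Gᶜ ⊆ (⋃ a0, E1 a0) ∪ (E2 ∪ E3) := by
      intro x hx
      rw [Set.mem_compl_iff, hG, Set.mem_setOf_eq] at hx
      push_neg at hx
      by_cases h1 : ∀ a, |((empMeas x) {a}).toReal - (R {a}).toReal| < δ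
      · by_cases h2 : |(∑ i, fl (x i)) / n - Dreal R P| < ε
        · obtain ⟨i, hi⟩ := hx h1 h2
          exact Or.inr (Or.inr ⟨i, hi⟩)
        · refine Or.inr (Or.inl ?_)
          rw [hE2, Set.mem_setOf_eq, hmeanl]
          exact not_lt.1 h2
      · push_neg at h1
        obtain ⟨a, ha⟩ := h1
        refine Or.inl (Set.mem_iUnion.2 ⟨a, ?_⟩)
        rw [hE1, Set.mem_setOf_eq, hmean1]
        have hemp : ((empMeas x) {a}).toReal = (∑ i, f1 a (x i)) / n := by
          rw [empMeas_apply_toReal hn0 x a]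
        rw [← hemp]
        exact ha
    have hE3null : (Measure.pi fun _ : Fin n => R) E3 = 0 := by
      have hZ : R {a | (R {a}).toReal = 0} = 0 := by
        rw [measure_eq_sum']
        refine Finset.sum_eq_zero fun a ha => ?_
        rw [Set.Finite.mem_toFinset, Set.mem_setOf_eq] at ha
        exact ((ENNReal.toReal_eq_zero_iff _).1 ha).resolve_right (measure_ne_top R _)
      have hrw : E3 = ⋃ i, Function.eval i ⁻¹' {a | (R {a}).toReal = 0} := by
        ext x; simp [hE3, Function.eval]
      rw [hrw]
      exact measure_iUnion_null fun i => Measure.pi_eval_preimage_null _ hZ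
    calc (Measure.pi fun _ : Fin n => R) Gᶜ
        ≤ (Measure.pi fun _ : Fin n => R) ((⋃ a0, E1 a0) ∪ (E2 ∪ E3)) := measure_mono hsub
      _ ≤ (Measure.pi fun _ : Fin n => R) (⋃ a0, E1 a0)
            + ((Measure.pi fun _ : Fin n => R) E2 + (Measure.pi fun _ : Fin n => R) E3) :=
          le_trans (measure_union_le _ _) (by gcongr; exact measure_union_le _ _)
      _ ≤ (∑ a0, (Measure.pi fun _ : Fin n => R) (E1 a0))
            + ((Measure.pi fun _ : Fin n => R) E2 + 0) := by
          gcongr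
          · exact le_trans (measure_iUnion_le _) (le_of_eq (tsum_fintype _))
          · exact le_of_eq hE3null
      _ ≤ (∑ a0, ENNReal.ofReal
              ((∑ a, (R {a}).toReal * (f1 a0 a - ∑ b, (R {b}).toReal * f1 a0 b) ^ 2)
                / (n * δ ^ 2)))
            + (ENNReal.ofReal
              ((∑ a, (R {a}).toReal * (fl a - ∑ b, (R {b}).toReal * fl b) ^ 2)
                / (n * ε ^ 2)) + 0) := by
          gcongr with a0
          · exact cheb R (f1 a0) hδ hn0
          · exact cheb R fl hε hn0
      _ ≤ ENNReal.ofReal (C / n) := by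
          rw [add_zero, ← ENNReal.ofReal_sum_of_nonneg (fun a0 _ => by positivity),
            ← ENNReal.ofReal_add (by positivity) (by positivity)]
          apply ENNReal.ofReal_le_ofReal
          rw [← Finset.sum_div, ← hA1, ← hA2]
          have hre : C / n = A1 / (n * δ ^ 2) + A2 / (n * ε ^ 2) := by
            rw [hCdef]; field_simp
          rw [hre]
  -- G has R-measure at least 1/2
  clear_value C
  have hCn : C / n ≤ 1 / 2 := by
    rw [div_le_iff₀ hnR]; linarith
  have hGmeas : MeasurableSet G := (Set.to_countable G).measurableSet
  have hRG2 : (1:ℝ) / 2 ≤ ((Measure.pi fun _ : Fin n => R) G).toReal := by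
    have h1 : ((Measure.pi fun _ : Fin n => R) Gᶜ).toReal ≤ 1 / 2 :=
      ENNReal.toReal_le_of_le_ofReal (by norm_num)
        (le_trans hcompl (ENNReal.ofReal_le_ofReal hCn))
    have h2 : ((Measure.pi fun _ : Fin n => R) G).toReal
        + ((Measure.pi fun _ : Fin n => R) Gᶜ).toReal = 1 := by
      rw [← ENNReal.toReal_add (measure_ne_top _ _) (measure_ne_top _ _),
        measure_add_measure_compl hGmeas, measure_univ, ENNReal.toReal_one]
    linarith
  set T : Set (Fin n → Y) := {x | ∀ a, |((empMeas x) {a}).toReal - (R {a}).toReal| < δ} with hT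
  have hGT : G ⊆ T := fun x hx => hx.1
  have hRGsum : ∑ x ∈ G.toFinite.toFinset, ∏ i, (R {x i}).toReal
      = ((Measure.pi fun _ : Fin n => R) G).toReal := by
    rw [pi_apply_eq, ENNReal.toReal_ofReal (Finset.sum_nonneg fun x _ =>
      Finset.prod_nonneg fun i _ => ENNReal.toReal_nonneg)]
  have hpoint : ∀ x ∈ G.toFinite.toFinset,
      Real.exp (-(n * (Dreal R P + ε))) * ∏ i, (R {x i}).toReal
        ≤ ∏ i, (P {x i}).toReal := by
    intro x hx
    rw [Set.Finite.mem_toFinset] at hx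
    obtain ⟨h1, h2, h3⟩ := hx
    have hrpos : ∀ i, 0 < (R {x i}).toReal :=
      fun i => lt_of_le_of_ne ENNReal.toReal_nonneg (Ne.symm (h3 i))
    have hppos : ∀ i, 0 < (P {x i}).toReal := fun i =>
      ENNReal.toReal_pos (fun h0 => h3 i (by simp [hRP h0])) (measure_ne_top P _)
    have hprod : ∏ i, (R {x i}).toReal
        = (∏ i, (P {x i}).toReal) * Real.exp (∑ i, fl (x i)) := by
      rw [Real.exp_sum, ← Finset.prod_mul_distrib]
      refine Finset.prod_congr rfl fun i _ => ?_
      have hfli : fl (x i) = Real.log ((R {x i}).toReal / (P {x i}).toReal) := by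
        rw [hfl]; exact if_neg (h3 i)
      rw [hfli, Real.exp_log (div_pos (hrpos i) (hppos i)), mul_comm ((P {x i}).toReal)]
      exact (div_mul_cancel₀ _ (hppos i).ne').symm
    have hsum : ∑ i, fl (x i) ≤ n * (Dreal R P + ε) := by
      have habs := (abs_lt.1 h2).2
      have h4 : (∑ i, fl (x i)) / n < Dreal R P + ε := by linarith
      have h5 := (div_lt_iff₀ hnR).1 h4
      rw [mul_comm]
      linarith
    rw [hprod, mul_left_comm, ← Real.exp_add]
    have harg : -(n * (Dreal R P + ε)) + ∑ i, fl (x i)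
        = ∑ i, fl (x i) - n * (Dreal R P + ε) := by ring
    rw [harg]
    calc (∏ i, (P {x i}).toReal) * Real.exp (∑ i, fl (x i) - n * (Dreal R P + ε))
        ≤ (∏ i, (P {x i}).toReal) * 1 := by
          apply mul_le_mul_of_nonneg_left _ (Finset.prod_nonneg fun i _ =>
            ENNReal.toReal_nonneg)
          exact Real.exp_le_one_iff.2 (by linarith)
      _ = ∏ i, (P {x i}).toReal := mul_one _
  calc ENNReal.ofReal (Real.exp (-(n * (Dreal R P + ε))) / 2)
      ≤ ENNReal.ofReal (∑ x ∈ G.toFinite.toFinset, ∏ i, (P {x i}).toReal) := by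
        apply ENNReal.ofReal_le_ofReal
        calc Real.exp (-(n * (Dreal R P + ε))) / 2
            = Real.exp (-(n * (Dreal R P + ε))) * (1 / 2) := by ring
          _ ≤ Real.exp (-(n * (Dreal R P + ε)))
              * ∑ x ∈ G.toFinite.toFinset, ∏ i, (R {x i}).toReal := by
              apply mul_le_mul_of_nonneg_left _ (Real.exp_nonneg _)
              rw [hRGsum]; exact hRG2
          _ = ∑ x ∈ G.toFinite.toFinset,
                Real.exp (-(n * (Dreal R P + ε))) * ∏ i, (R {x i}).toReal :=
              Finset.mul_sum _ _ _
          _ ≤ ∑ x ∈ G.toFinite.toFinset, ∏ i, (P {x i}).toReal :=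
              Finset.sum_le_sum hpoint
    _ = (Measure.pi fun _ : Fin n => P) G := (pi_apply_eq P G).symm
    _ ≤ (Measure.pi fun _ : Fin n => P) T := measure_mono hGT

lemma integral_llr_eq (R P : Measure Y) [IsProbabilityMeasure R] [IsProbabilityMeasure P]
    (h : R ≪ P) : ∫ x, llr R P x ∂ R = Dreal R P := by
  rw [integral_fintype .of_finite]
  refine Finset.sum_congr rfl fun a _ => ?_
  by_cases hra : R {a} = 0
  · simp [hra, Measure.real]
  · have hpa : P {a} ≠ 0 := fun h0 => hra (h h0)
    have hrn : R.rnDeriv P a * P {a} = R {a} := by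
      have h2 := Measure.setLIntegral_rnDeriv h {a}
      rwa [lintegral_singleton] at h2
    have hrd : R.rnDeriv P a = R {a} / P {a} := by
      rw [← hrn, mul_div_assoc, ENNReal.div_self hpa (measure_ne_top P _), mul_one]
    rw [smul_eq_mul, llr, hrd, ENNReal.toReal_div, Measure.real]

lemma Dreal_nonneg (R P : Measure Y) [IsProbabilityMeasure R] [IsProbabilityMeasure P]
    (h : R ≪ P) : 0 ≤ Dreal R P := by
  have key : ∀ a, (R {a}).toReal * Real.log ((P {a}).toReal / (R {a}).toReal)
      ≤ (P {a}).toReal - (R {a}).toReal := by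
    intro a
    by_cases hra : (R {a}).toReal = 0
    · simp [hra, ENNReal.toReal_nonneg]
    · have hrpos : 0 < (R {a}).toReal :=
        lt_of_le_of_ne ENNReal.toReal_nonneg (Ne.symm hra)
      have hppos : 0 < (P {a}).toReal := by
        refine ENNReal.toReal_pos (fun h0 => hra ?_) (measure_ne_top P _)
        simp [h h0]
      have hlog := Real.log_le_sub_one_of_pos (div_pos hppos hrpos)
      have := mul_le_mul_of_nonneg_left hlog hrpos.le
      calc (R {a}).toReal * Real.log ((P {a}).toReal / (R {a}).toReal)
          ≤ (R {a}).toReal * ((P {a}).toReal / (R {a}).toReal - 1) := this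
        _ = (P {a}).toReal - (R {a}).toReal := by field_simp
  have hsum : ∑ a, (R {a}).toReal * Real.log ((P {a}).toReal / (R {a}).toReal) ≤ 0 := by
    calc ∑ a, (R {a}).toReal * Real.log ((P {a}).toReal / (R {a}).toReal)
        ≤ ∑ a, ((P {a}).toReal - (R {a}).toReal) := Finset.sum_le_sum fun a _ => key a
      _ = 0 := by
          rw [Finset.sum_sub_distrib, sum_toReal_eq_one, sum_toReal_eq_one, sub_self]
  have hneg : Dreal R P = -∑ a, (R {a}).toReal * Real.log ((P {a}).toReal / (R {a}).toReal) := by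
    rw [Dreal, ← Finset.sum_neg_distrib]
    refine Finset.sum_congr rfl fun a _ => ?_
    by_cases hra : (R {a}).toReal = 0
    · simp [hra]
    · have hrpos : 0 < (R {a}).toReal :=
        lt_of_le_of_ne ENNReal.toReal_nonneg (Ne.symm hra)
      have hppos : 0 < (P {a}).toReal := by
        refine ENNReal.toReal_pos (fun h0 => hra ?_) (measure_ne_top P _)
        simp [h h0]
      rw [← mul_neg, ← Real.log_inv, inv_div]
  rw [hneg]
  linarith

end Helpers

section Nbhd
variable {X : Type*} [Fintype X] [TopologicalSpace X] [DiscreteTopology X]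
  [MeasurableSpace X] [BorelSpace X]

instance : MeasurableSingletonClass X :=
  ⟨fun a => (isOpen_discrete {a}).measurableSet⟩

lemma nbhd (R : ProbabilityMeasure X) {U : Set (ProbabilityMeasure X)}
    (hU : IsOpen U) (hR : R ∈ U) :
    ∃ δ : ℝ, 0 < δ ∧ ∀ ν : ProbabilityMeasure X,
      (∀ a, |((ν : Measure X) {a}).toReal - ((R : Measure X) {a}).toReal| < δ) → ν ∈ U := by
  by_contra hcon
  push_neg at hcon
  choose ν hν hνU using fun k : ℕ => hcon (1 / (k + 1)) (by positivity)
  have htend : Tendsto ν atTop (nhds R) := by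
    rw [ProbabilityMeasure.tendsto_iff_forall_integral_tendsto]
    intro f
    have hint : ∀ μ : ProbabilityMeasure X,
        ∫ x, f x ∂(μ : Measure X) = ∑ a, ((μ : Measure X) {a}).toReal • f a :=
      fun μ => integral_fintype .of_finite
    simp_rw [hint]
    refine tendsto_finset_sum _ fun a _ => Tendsto.smul_const ?_ _
    have habs : Tendsto (fun k => |((ν k : Measure X) {a}).toReal
        - ((R : Measure X) {a}).toReal|) atTop (nhds 0) :=
      squeeze_zero (fun k => abs_nonneg _) (fun k => (hν k a).le)
        tendsto_one_div_add_atTop_nhds_zero_nat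
    have := tendsto_zero_iff_abs_tendsto_zero _ |>.2 habs
    exact tendsto_sub_nhds_zero_iff.1 this
  have := htend.eventually (hU.mem_nhds hR)
  obtain ⟨k, hk⟩ := this.exists
  exact hνU k hk
end Nbhd

section ERealLemmas

lemma ereal_le_coe_ennreal_iInf {ι : Sort*} (f : ι → ℝ≥0∞) (L : EReal)
    (h : ∀ i, L ≤ ((f i : ℝ≥0∞) : EReal)) : L ≤ ((⨅ i, f i : ℝ≥0∞) : EReal) := by
  induction L using EReal.rec with
  | bot => exact bot_le
  | top =>
    have : ∀ i, f i = ⊤ := fun i =>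
      EReal.coe_ennreal_eq_top_iff.1 (top_le_iff.1 (h i))
    simp [iInf_eq_top.2 fun i => this i]
  | coe x =>
    by_cases hx : x ≤ 0
    · exact le_trans (by exact_mod_cast hx) (EReal.coe_ennreal_nonneg _)
    · push_neg at hx
      have hof : ∀ i, ENNReal.ofReal x ≤ f i := by
        intro i
        rw [← EReal.coe_ennreal_le_coe_ennreal_iff, EReal.coe_ennreal_ofReal,
          max_eq_left hx.le]
        exact h i
      have h2 : ENNReal.ofReal x ≤ ⨅ i, f i := le_iInf hof
      calc (x : EReal) = ((ENNReal.ofReal x : ℝ≥0∞) : EReal) := by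
            rw [EReal.coe_ennreal_ofReal, max_eq_left hx.le]
        _ ≤ _ := EReal.coe_ennreal_le_coe_ennreal_iff.2 h2

lemma ereal_le_coe_of_forall_add (L : EReal) (K : ℝ)
    (h : ∀ ε : ℝ, 0 < ε → L ≤ ((K + ε : ℝ) : EReal)) : L ≤ (K : EReal) := by
  refine le_of_forall_gt_imp_ge_of_dense fun b hb => ?_
  obtain ⟨q, hq1, hq2⟩ := EReal.lt_iff_exists_real_btwn.1 hb
  have hε : 0 < q - K := by
    have := EReal.coe_lt_coe_iff.1 hq1
    linarith
  calc L ≤ ((K + (q - K) : ℝ) : EReal) := h _ hε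
    _ = (q : EReal) := by norm_num
    _ ≤ b := hq2.le

lemma limsup_le_of_tendsto_bound {u : ℕ → EReal} {g : ℕ → ℝ} {L : ℝ}
    (h : ∀ᶠ t in atTop, u t ≤ ((g t : ℝ) : EReal))
    (hg : Tendsto g atTop (nhds L)) : Filter.limsup u atTop ≤ (L : EReal) := by
  have h2 : Tendsto (fun t => ((g t : ℝ) : EReal)) atTop (nhds (L : EReal)) :=
    EReal.tendsto_coe.2 hg
  calc Filter.limsup u atTop ≤ Filter.limsup (fun t => ((g t : ℝ) : EReal)) atTop :=
        limsup_le_limsup h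
    _ = (L : EReal) := h2.limsup_eq

end ERealLemmas

set_option maxHeartbeats 1000000 in
/-- **Extended Sanov theorem, finite sample space, upper bound.** -/
theorem extended_sanov_finite_upper
    {X : Type*} [Fintype X] [TopologicalSpace X] [DiscreteTopology X]
    [MeasurableSpace X] [BorelSpace X]
    (P Q : Measure X) [IsProbabilityMeasure P] [IsProbabilityMeasure Q]
    (n m : ℕ → ℕ) (hn : ∀ t, 0 < n t) (hm : ∀ t, 0 < m t)
    (hn' : Tendsto n atTop atTop) (hm' : Tendsto m atTop atTop)
    (c : ℝ) (hc0 : 0 < c) (hc1 : c < 1)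
    (hc : Tendsto (fun t => (n t : ℝ) / ((n t : ℝ) + (m t : ℝ))) atTop (nhds c))
    (Γ : Set (ProbabilityMeasure X × ProbabilityMeasure X)) :
    Filter.limsup (fun t =>
        ((-(1 / ((n t : ℝ) + (m t : ℝ))) : ℝ) : EReal) *
          elog (((Measure.pi fun _ : Fin (n t) => P).prod (Measure.pi fun _ : Fin (m t) => Q))
            {xy : (Fin (n t) → X) × (Fin (m t) → X) |
              (empProb (hn t).ne' xy.1, empProb (hm t).ne' xy.2) ∈ Γ})) atTop
      ≤ ((⨅ RS ∈ interior Γ,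
            ENNReal.ofReal c * KL (RS.1 : Measure X) P
              + ENNReal.ofReal (1 - c) * KL (RS.2 : Measure X) Q : ℝ≥0∞) : EReal) := by
  classical
  set u : ℕ → EReal := fun t =>
      ((-(1 / ((n t : ℝ) + (m t : ℝ))) : ℝ) : EReal) *
        elog (((Measure.pi fun _ : Fin (n t) => P).prod (Measure.pi fun _ : Fin (m t) => Q))
          {xy : (Fin (n t) → X) × (Fin (m t) → X) |
            (empProb (hn t).ne' xy.1, empProb (hm t).ne' xy.2) ∈ Γ}) with hu
  have main : ∀ RS : ProbabilityMeasure X × ProbabilityMeasure X, RS ∈ interior Γ →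
      Filter.limsup u atTop
        ≤ ((ENNReal.ofReal c * KL (RS.1 : Measure X) P
            + ENNReal.ofReal (1 - c) * KL (RS.2 : Measure X) Q : ℝ≥0∞) : EReal) := by
    intro RS hRS
    by_cases htop : (ENNReal.ofReal c * KL (RS.1 : Measure X) P
        + ENNReal.ofReal (1 - c) * KL (RS.2 : Measure X) Q : ℝ≥0∞) = ⊤
    · rw [htop, EReal.coe_ennreal_top]; exact le_top
    have hc0' : ENNReal.ofReal c ≠ 0 := by
      simp [ENNReal.ofReal_eq_zero, not_le, hc0]
    have hc1' : ENNReal.ofReal (1 - c) ≠ 0 := by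
      simp only [ne_eq, ENNReal.ofReal_eq_zero, not_le]
      linarith
    have hKL1 : KL (RS.1 : Measure X) P ≠ ⊤ := by
      intro h
      exact htop (by rw [h, ENNReal.mul_top hc0', top_add])
    have hKL2 : KL (RS.2 : Measure X) Q ≠ ⊤ := by
      intro h
      exact htop (by rw [h, ENNReal.mul_top hc1', add_top])
    have h1 : (RS.1 : Measure X) ≪ P ∧ Integrable (llr (RS.1 : Measure X) P) (RS.1 : Measure X) := by
      by_contra hcon
      exact hKL1 (by rw [KL, if_neg hcon])
    have h2 : (RS.2 : Measure X) ≪ Q ∧ Integrable (llr (RS.2 : Measure X) Q) (RS.2 : Measure X) := by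
      by_contra hcon
      exact hKL2 (by rw [KL, if_neg hcon])
    have hKLeq1 : KL (RS.1 : Measure X) P = ENNReal.ofReal (Dreal (RS.1 : Measure X) P) := by
      rw [KL, if_pos h1, integral_llr_eq _ _ h1.1]
    have hKLeq2 : KL (RS.2 : Measure X) Q = ENNReal.ofReal (Dreal (RS.2 : Measure X) Q) := by
      rw [KL, if_pos h2, integral_llr_eq _ _ h2.1]
    set D₁ := Dreal (RS.1 : Measure X) P with hD₁
    set D₂ := Dreal (RS.2 : Measure X) Q with hD₂
    have hD₁0 : 0 ≤ D₁ := Dreal_nonneg _ _ h1.1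
    have hD₂0 : 0 ≤ D₂ := Dreal_nonneg _ _ h2.1
    set K := c * D₁ + (1 - c) * D₂ with hK
    have hK0 : 0 ≤ K :=
      add_nonneg (mul_nonneg hc0.le hD₁0) (mul_nonneg (by linarith) hD₂0)
    have hval : ((ENNReal.ofReal c * KL (RS.1 : Measure X) P
        + ENNReal.ofReal (1 - c) * KL (RS.2 : Measure X) Q : ℝ≥0∞) : EReal) = (K : EReal) := by
      rw [hKLeq1, hKLeq2, ← ENNReal.ofReal_mul hc0.le,
        ← ENNReal.ofReal_mul (by linarith : (0:ℝ) ≤ 1 - c),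
        ← ENNReal.ofReal_add (mul_nonneg hc0.le hD₁0) (mul_nonneg (by linarith) hD₂0),
        EReal.coe_ennreal_ofReal, max_eq_left hK0, hK]
    rw [hval]
    apply ereal_le_coe_of_forall_add
    intro ε hε
    obtain ⟨U, V, hUo, hVo, hRU, hSV, hUV⟩ :=
      isOpen_prod_iff.1 isOpen_interior RS.1 RS.2 (by simpa using hRS)
    obtain ⟨δ₁, hδ₁, hU⟩ := nbhd RS.1 hUo hRU
    obtain ⟨δ₂, hδ₂, hV⟩ := nbhd RS.2 hVo hSV
    obtain ⟨N₁, hN₁⟩ := lemS P (RS.1 : Measure X) h1.1 hδ₁ hε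
    obtain ⟨N₂, hN₂⟩ := lemS Q (RS.2 : Measure X) h2.1 hδ₂ hε
    set g : ℕ → ℝ := fun t =>
      ((n t : ℝ) * (D₁ + ε) + (m t : ℝ) * (D₂ + ε) + 2 * Real.log 2)
        / ((n t : ℝ) + (m t : ℝ)) with hgdef
    have hspos : ∀ t, (0:ℝ) < (n t : ℝ) + (m t : ℝ) := by
      intro t
      have h1t : (0:ℝ) < (n t : ℝ) := by exact_mod_cast hn t
      have h2t : (0:ℝ) ≤ (m t : ℝ) := by positivity
      linarith
    have hev : ∀ᶠ t in atTop, u t ≤ ((g t : ℝ) : EReal) := by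
      filter_upwards [hn'.eventually_ge_atTop N₁, hm'.eventually_ge_atTop N₂] with t h1t h2t
      have hA := hN₁ (n t) h1t (hn t)
      have hB := hN₂ (m t) h2t (hm t)
      set b₁ : ℝ := Real.exp (-((n t : ℝ) * (D₁ + ε))) / 2 with hb₁def
      set b₂ : ℝ := Real.exp (-((m t : ℝ) * (D₂ + ε))) / 2 with hb₂def
      have hb₁ : 0 < b₁ := by rw [hb₁def]; positivity
      have hb₂ : 0 < b₂ := by rw [hb₂def]; positivity
      set prob := ((Measure.pi fun _ : Fin (n t) => P).prod (Measure.pi fun _ : Fin (m t) => Q))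
          {xy : (Fin (n t) → X) × (Fin (m t) → X) |
            (empProb (hn t).ne' xy.1, empProb (hm t).ne' xy.2) ∈ Γ} with hprob
      have hsubset : ({x : Fin (n t) → X | ∀ a,
            |((empMeas x) {a}).toReal - ((RS.1 : Measure X) {a}).toReal| < δ₁} ×ˢ
          {y : Fin (m t) → X | ∀ a,
            |((empMeas y) {a}).toReal - ((RS.2 : Measure X) {a}).toReal| < δ₂})
          ⊆ {xy : (Fin (n t) → X) × (Fin (m t) → X) |
            (empProb (hn t).ne' xy.1, empProb (hm t).ne' xy.2) ∈ Γ} := by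
        rintro ⟨x, y⟩ ⟨hx, hy⟩
        have hxU : empProb (hn t).ne' x ∈ U := hU _ fun a => hx a
        have hyV : empProb (hm t).ne' y ∈ V := hV _ fun a => hy a
        simp only [Set.mem_setOf_eq]
        exact interior_subset (hUV ⟨hxU, hyV⟩)
      have hlow : ENNReal.ofReal (b₁ * b₂) ≤ prob := by
        rw [ENNReal.ofReal_mul hb₁.le]
        calc ENNReal.ofReal b₁ * ENNReal.ofReal b₂
            ≤ (Measure.pi fun _ : Fin (n t) => P)
                {x : Fin (n t) → X | ∀ a,
                  |((empMeas x) {a}).toReal - ((RS.1 : Measure X) {a}).toReal| < δ₁}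
              * (Measure.pi fun _ : Fin (m t) => Q)
                {y : Fin (m t) → X | ∀ a,
                  |((empMeas y) {a}).toReal - ((RS.2 : Measure X) {a}).toReal| < δ₂} :=
              mul_le_mul' hA hB
          _ = ((Measure.pi fun _ : Fin (n t) => P).prod (Measure.pi fun _ : Fin (m t) => Q))
                (_ ×ˢ _) := (Measure.prod_prod _ _).symm
          _ ≤ prob := measure_mono hsubset
      have hup : prob ≤ 1 := prob_le_one
      have hne0 : prob ≠ 0 :=
        (lt_of_lt_of_le (ENNReal.ofReal_pos.2 (by positivity)) hlow).ne'
      have hnetop : prob ≠ ⊤ := (lt_of_le_of_lt hup ENNReal.one_lt_top).ne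
      have helog : elog prob = ((Real.log prob.toReal : ℝ) : EReal) := by
        rw [elog, if_neg hne0, if_neg hnetop]
      have huteq : u t = ((-(1 / ((n t : ℝ) + (m t : ℝ))) * Real.log prob.toReal : ℝ) : EReal) := by
        rw [hu]
        simp only
        rw [← hprob, helog, EReal.coe_mul]
      rw [huteq]
      apply EReal.coe_le_coe_iff.2
      have hblog : Real.log (b₁ * b₂) ≤ Real.log prob.toReal := by
        apply Real.log_le_log (by positivity)
        exact (ENNReal.ofReal_le_iff_le_toReal hnetop).1 hlow
      have hlogb : Real.log (b₁ * b₂)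
          = -((n t : ℝ) * (D₁ + ε)) - Real.log 2 + (-((m t : ℝ) * (D₂ + ε)) - Real.log 2) := by
        rw [Real.log_mul hb₁.ne' hb₂.ne', hb₁def, hb₂def,
          Real.log_div (Real.exp_ne_zero _) two_ne_zero,
          Real.log_div (Real.exp_ne_zero _) two_ne_zero, Real.log_exp, Real.log_exp]
      have hs0 := hspos t
      calc -(1 / ((n t : ℝ) + (m t : ℝ))) * Real.log prob.toReal
          ≤ -(1 / ((n t : ℝ) + (m t : ℝ))) * Real.log (b₁ * b₂) := by
            apply mul_le_mul_of_nonpos_left hblog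
            simp only [neg_nonpos]
            positivity
        _ = g t := by
            rw [hlogb, hgdef]
            field_simp
            ring
    have hg : Tendsto g atTop (nhds (K + ε)) := by
      have hnm : Tendsto (fun t => (n t : ℝ) + (m t : ℝ)) atTop atTop :=
        tendsto_atTop_mono (fun t => le_add_of_nonneg_right (by positivity))
          (tendsto_natCast_atTop_atTop.comp hn')
      have hinv : Tendsto (fun t => 1 / ((n t : ℝ) + (m t : ℝ))) atTop (nhds 0) := by
        simpa [one_div, Pi.inv_def] using hnm.inv_tendsto_atTop
      have hb' : Tendsto (fun t => (m t : ℝ) / ((n t : ℝ) + (m t : ℝ))) atTop (nhds (1 - c)) := by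
        have hcongr : ∀ t, 1 - (n t : ℝ) / ((n t : ℝ) + (m t : ℝ))
            = (m t : ℝ) / ((n t : ℝ) + (m t : ℝ)) := by
          intro t
          field_simp [(hspos t).ne']
          ring
        exact Tendsto.congr hcongr (tendsto_const_nhds.sub hc)
      have hcomb : Tendsto (fun t =>
          ((n t : ℝ) / ((n t : ℝ) + (m t : ℝ))) * (D₁ + ε)
            + ((m t : ℝ) / ((n t : ℝ) + (m t : ℝ))) * (D₂ + ε)
            + 2 * Real.log 2 * (1 / ((n t : ℝ) + (m t : ℝ)))) atTop
          (nhds (c * (D₁ + ε) + (1 - c) * (D₂ + ε) + 2 * Real.log 2 * 0)) :=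
        ((hc.mul_const _).add (hb'.mul_const _)).add (hinv.const_mul _)
      have hlim : c * (D₁ + ε) + (1 - c) * (D₂ + ε) + 2 * Real.log 2 * 0 = K + ε := by
        rw [hK]; ring
      rw [hlim] at hcomb
      refine Tendsto.congr (fun t => ?_) hcomb
      rw [hgdef]
      first
        | (field_simp; ring)
        | field_simp
    exact limsup_le_of_tendsto_bound hev hg
  refine ereal_le_coe_ennreal_iInf _ _ fun RS => ?_
  by_cases hRS : RS ∈ interior Γ
  · rw [iInf_pos hRS]
    exact main RS hRS
  · rw [iInf_neg hRS, EReal.coe_ennreal_top]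
    exact le_top
end
end

section
/- Let X be a finite set and let P, Q be probability measures on X. Let x_1,…,x_n be i.i.d. with law P and y_1,…,y_m be i.i.d. with law Q (jointly independent), and let n = n_t, m = m_t be sequences of positive integers tending to infinity with n_t/(n_t+m_t) → c for some c ∈ (0,1). Then for every set Γ of pairs of probability measures on X, liminf_{t→∞} −(1/(n_t+m_t)) · log (P^{⊗n_t} ⊗ Q^{⊗m_t})((P̂_{n_t}, Q̂_{m_t}) ∈ Γ) ≥ inf over (R,S) ∈ Γ of c·D(R‖P) + (1−c)·D(S‖Q). -/
open MeasureTheory Filter Set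
open scoped ENNReal NNReal

noncomputable section

set_option linter.unusedSectionVars false
set_option linter.unusedVariables false

-- ============ auxiliary lemmas ============
open Classical

section Aux

variable {X : Type*} [Fintype X] [MeasurableSpace X] [MeasurableSingletonClass X]

/-- measure of a set in a fintype is the sum of singleton masses -/
lemma meas_set_eq_sum (μ : Measure X) (S : Set X) :
    μ S = ∑ z ∈ S.toFinset, μ {z} := by
  rw [← measure_biUnion_finset (f := fun z => ({z} : Set X))]
  · congr 1
    ext z
    simp
  · intro a _ b _ hab
    simp [Function.onFun, Set.disjoint_singleton, hab]
  · intro b _; exact measurableSet_singleton b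

/-- count of value `a` in sample `x` -/
def cnt {n : ℕ} (x : Fin n → X) (a : X) : ℕ := (Finset.univ.filter fun i => x i = a).card

lemma empMeas_apply {n : ℕ} (x : Fin n → X) (a : X) :
    empMeas x {a} = (cnt x a : ℝ≥0∞) / n := by
  simp only [empMeas, Measure.smul_apply, Measure.finset_sum_apply, smul_eq_mul]
  rw [div_eq_mul_inv, mul_comm]
  congr 1
  rw [cnt]
  rw [Finset.card_filter]
  push_cast
  refine Finset.sum_congr rfl fun i _ => ?_
  rw [Measure.dirac_apply' _ (measurableSet_singleton a)]
  by_cases h : x i = a <;> simp [h]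

lemma cnt_eq_of_empMeas_eq {n : ℕ} (hn : n ≠ 0) {x x' : Fin n → X}
    (h : empMeas x = empMeas x') (a : X) : cnt x a = cnt x' a := by
  have h1 := empMeas_apply x a
  have h2 := empMeas_apply x' a
  rw [h, h2] at h1
  have hne : (n : ℝ≥0∞) ≠ 0 := by exact_mod_cast hn
  have := (ENNReal.div_eq_div_iff hne (ENNReal.natCast_ne_top n) hne
    (ENNReal.natCast_ne_top n)).1 h1.symm
  have h3 : (cnt x a : ℝ≥0∞) = cnt x' a :=
    (ENNReal.mul_right_inj hne (ENNReal.natCast_ne_top n)).1 this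
  exact_mod_cast h3

lemma pi_singleton {n : ℕ} (P : Measure X) [SigmaFinite P] (x : Fin n → X) :
    (Measure.pi fun _ : Fin n => P) {x} = ∏ i, P {x i} := by
  rw [← Set.univ_pi_singleton x, Measure.pi_pi]

lemma prod_meas_cnt {n : ℕ} (P : Measure X) (x : Fin n → X) :
    ∏ i, P {x i} = ∏ a, P {a} ^ cnt x a := by
  rw [← Finset.prod_fiberwise_of_maps_to (g := x) (t := Finset.univ)
    (fun i _ => Finset.mem_univ _) (fun i => P {x i})]
  refine Finset.prod_congr rfl fun a _ => ?_
  rw [show cnt x a = (Finset.filter (fun i => x i = a) Finset.univ).card from rfl,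
    ← Finset.prod_const]
  refine Finset.prod_congr rfl fun i hi => ?_
  rw [(Finset.mem_filter.1 hi).2]

end Aux

section Aux2

variable {X : Type*} [Fintype X] [MeasurableSpace X] [MeasurableSingletonClass X]

instance piMSC {n : ℕ} : MeasurableSingletonClass (Fin n → X) :=
  ⟨fun x => by
    rw [← Set.univ_pi_singleton x]
    exact MeasurableSet.univ_pi fun i => measurableSet_singleton (x i)⟩

lemma empMeas_ne_top {n : ℕ} (hn : n ≠ 0) (x : Fin n → X) (a : X) : empMeas x {a} ≠ ⊤ := by
  haveI := empMeas_isProb hn x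
  exact measure_ne_top _ _

/-- the type-class bound: the `P^n`-mass of the type class of `x₀` is at most
`∏ (P a / ν a) ^ (cnt a)`. -/
lemma typeClass_bound {n : ℕ} (hn : n ≠ 0) (P : Measure X) [IsProbabilityMeasure P]
    (x₀ : Fin n → X) :
    ∑ x ∈ Finset.univ.filter (fun x : Fin n → X => empProb hn x = empProb hn x₀),
        (Measure.pi fun _ : Fin n => P) {x}
      ≤ ∏ a, (P {a} / empMeas x₀ {a}) ^ cnt x₀ a := by
  classical
  set ν := empMeas x₀ with hν
  haveI : IsProbabilityMeasure ν := empMeas_isProb hn x₀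
  set k := cnt x₀ with hk
  have hfib : ∀ x ∈ Finset.univ.filter (fun x : Fin n → X => empProb hn x = empProb hn x₀),
      ∀ a, cnt x a = k a := by
    intro x hx a
    have := (Finset.mem_filter.1 hx).2
    exact cnt_eq_of_empMeas_eq hn (congrArg Subtype.val this) a
  -- value of P^n on each point of the fiber
  have hval : ∀ (μ : Measure X), IsProbabilityMeasure μ →
      ∀ x ∈ Finset.univ.filter (fun x : Fin n → X => empProb hn x = empProb hn x₀),
      (Measure.pi fun _ : Fin n => μ) {x} = ∏ a, μ {a} ^ k a := by
    intro μ hμ x hx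
    rw [pi_singleton, prod_meas_cnt]
    exact Finset.prod_congr rfl fun a _ => by rw [hfib x hx a]
  set N := (Finset.univ.filter (fun x : Fin n → X => empProb hn x = empProb hn x₀)).card with hN
  have hsum : ∀ (μ : Measure X), IsProbabilityMeasure μ →
      ∑ x ∈ Finset.univ.filter (fun x : Fin n → X => empProb hn x = empProb hn x₀),
        (Measure.pi fun _ : Fin n => μ) {x} = (N : ℝ≥0∞) * ∏ a, μ {a} ^ k a := by
    intro μ hμ
    rw [Finset.sum_congr rfl (hval μ hμ), Finset.sum_const, nsmul_eq_mul]
  -- the ν-mass bound: N * ∏ ν{a}^{k a} ≤ 1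
  have hν1 : (N : ℝ≥0∞) * ∏ a, ν {a} ^ k a ≤ 1 := by
    rw [← hsum ν inferInstance]
    haveI : IsProbabilityMeasure (Measure.pi fun _ : Fin n => ν) := inferInstance
    calc ∑ x ∈ Finset.univ.filter (fun x : Fin n → X => empProb hn x = empProb hn x₀),
          (Measure.pi fun _ : Fin n => ν) {x}
        ≤ ∑ x : Fin n → X, (Measure.pi fun _ : Fin n => ν) {x} :=
          Finset.sum_le_sum_of_subset (Finset.filter_subset _ _)
      _ = (Measure.pi fun _ : Fin n => ν) Set.univ := by
          rw [meas_set_eq_sum]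
          simp
      _ = 1 := measure_univ
  -- key factorization : G * ∏ ν^k = ∏ P^k
  have hfact : (∏ a, (P {a} / ν {a}) ^ k a) * ∏ a, ν {a} ^ k a = ∏ a, P {a} ^ k a := by
    rw [← Finset.prod_mul_distrib]
    refine Finset.prod_congr rfl fun a _ => ?_
    rcases Nat.eq_zero_or_pos (k a) with h | h
    · simp [h]
    · rw [← mul_pow]
      congr 1
      refine ENNReal.div_mul_cancel ?_ (empMeas_ne_top hn x₀ a)
      rw [hν, empMeas_apply]
      simp only [ne_eq, ENNReal.div_eq_zero_iff]
      push_neg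
      exact ⟨by exact_mod_cast h.ne', ENNReal.natCast_ne_top n⟩
  rw [hsum P inferInstance]
  calc (N : ℝ≥0∞) * ∏ a, P {a} ^ k a
      = ((N : ℝ≥0∞) * ∏ a, ν {a} ^ k a) * ∏ a, (P {a} / ν {a}) ^ k a := by
        rw [mul_assoc, mul_comm (∏ a, ν {a} ^ k a), hfact]
    _ ≤ 1 * ∏ a, (P {a} / ν {a}) ^ k a := mul_le_mul_left hν1 _
    _ = _ := one_mul _

end Aux2

section KLAux

variable {X : Type*} [Fintype X] [MeasurableSpace X] [MeasurableSingletonClass X]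

lemma abscont_of_singletons {R P : Measure X} (h : ∀ a, P {a} = 0 → R {a} = 0) : R ≪ P := by
  intro S hS
  rw [meas_set_eq_sum]
  refine Finset.sum_eq_zero fun a ha => ?_
  refine h a (le_antisymm (le_trans (measure_mono ?_) hS.le) zero_le)
  simpa using (Set.mem_toFinset.1 ha)

lemma not_abscont_iff {R P : Measure X} : ¬ R ≪ P ↔ ∃ a, P {a} = 0 ∧ R {a} ≠ 0 := by
  constructor
  · intro h
    by_contra hc
    push_neg at hc
    exact h (abscont_of_singletons fun a ha => hc a ha)
  · rintro ⟨a, hPa, hRa⟩ h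
    exact hRa (h hPa)

lemma integral_llr_fintype (R P : Measure X) [IsFiniteMeasure R] [IsProbabilityMeasure P]
    (h : R ≪ P) :
    ∫ x, llr R P x ∂ R
      = ∑ a, (R {a}).toReal * Real.log ((R {a}).toReal / (P {a}).toReal) := by
  classical
  set f : X → ℝ≥0∞ := fun a => R {a} / P {a} with hf
  have hfm : Measurable f := measurable_of_countable f
  have hwd : P.withDensity f = R := by
    rw [Measure.ext_iff_singleton]
    intro a
    rw [withDensity_apply _ (measurableSet_singleton a), lintegral_singleton]
    rcases eq_or_ne (P {a}) 0 with h0 | h0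
    · rw [h0, mul_zero, (h h0)]
    · exact ENNReal.div_mul_cancel h0 (measure_ne_top _ _)
  have hrn : R.rnDeriv P =ᶠ[ae P] f := by
    conv_lhs => rw [← hwd]
    exact Measure.rnDeriv_withDensity P hfm
  have hrn' : R.rnDeriv P =ᶠ[ae R] f := h.ae_eq hrn
  have hllr : llr R P =ᶠ[ae R] fun a => Real.log ((f a).toReal) := by
    filter_upwards [hrn'] with a ha
    rw [llr_def]
    simp only [ha]
  rw [integral_congr_ae hllr, integral_fintype _]
  refine Finset.sum_congr rfl fun a _ => ?_
  rw [smul_eq_mul, measureReal_def, hf, ENNReal.toReal_div]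
  exact Integrable.of_finite

/-- Gibbs' inequality on a fintype. -/
lemma gibbs_nonneg (R P : Measure X) [IsProbabilityMeasure R] [IsProbabilityMeasure P]
    (h : R ≪ P) :
    0 ≤ ∑ a, (R {a}).toReal * Real.log ((R {a}).toReal / (P {a}).toReal) := by
  classical
  have hsumR : ∑ a, (R {a}).toReal = 1 := by
    have := meas_set_eq_sum R Set.univ
    rw [measure_univ] at this
    have := congrArg ENNReal.toReal this
    rw [ENNReal.toReal_sum (fun a _ => measure_ne_top _ _)] at this
    simpa using this.symm
  have hsumP : ∑ a, (P {a}).toReal = 1 := by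
    have := meas_set_eq_sum P Set.univ
    rw [measure_univ] at this
    have := congrArg ENNReal.toReal this
    rw [ENNReal.toReal_sum (fun a _ => measure_ne_top _ _)] at this
    simpa using this.symm
  have key : ∀ a, (R {a}).toReal - (P {a}).toReal
      ≤ (R {a}).toReal * Real.log ((R {a}).toReal / (P {a}).toReal) := by
    intro a
    set x := (R {a}).toReal with hx
    set y := (P {a}).toReal with hy
    have hx0 : 0 ≤ x := ENNReal.toReal_nonneg
    have hy0 : 0 ≤ y := ENNReal.toReal_nonneg
    rcases eq_or_lt_of_le hx0 with h0 | h0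
    · simp [← h0, hy0]
    · have hyp : 0 < y := by
        rcases eq_or_lt_of_le hy0 with h0' | h0'
        · exfalso
          have : P {a} = 0 := by
            have := measure_ne_top P {a}
            simp only [hy] at h0'
            exact (ENNReal.toReal_eq_zero_iff _).1 h0'.symm |>.resolve_right this
          have hra := h this
          rw [hx] at h0
          simp [hra] at h0
        · exact h0'
      have hlog : Real.log (y / x) ≤ y / x - 1 := Real.log_le_sub_one_of_pos (by positivity)
      have : -(Real.log (x / y)) ≤ y / x - 1 := by
        rw [← Real.log_inv]
        rw [show (x / y)⁻¹ = y / x by field_simp]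
        exact hlog
      have h2 : 1 - y / x ≤ Real.log (x / y) := by linarith
      calc x - y = x * (1 - y / x) := by field_simp
        _ ≤ x * Real.log (x / y) := by
            exact mul_le_mul_of_nonneg_left h2 hx0
  calc (0:ℝ) = ∑ a, ((R {a}).toReal - (P {a}).toReal) := by
        rw [Finset.sum_sub_distrib, hsumR, hsumP, sub_self]
    _ ≤ _ := Finset.sum_le_sum fun a _ => key a

lemma KL_eq_of_ac {R P : Measure X} [IsFiniteMeasure R] [IsProbabilityMeasure P] (h : R ≪ P) :
    KL R P = ENNReal.ofReal
      (∑ a, (R {a}).toReal * Real.log ((R {a}).toReal / (P {a}).toReal)) := by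
  rw [KL, if_pos ⟨h, Integrable.of_finite⟩, integral_llr_fintype R P h]

lemma KL_eq_top_iff {R P : Measure X} [IsFiniteMeasure R] [IsProbabilityMeasure P] :
    KL R P = ⊤ ↔ ¬ R ≪ P := by
  constructor
  · intro ht hac
    rw [KL_eq_of_ac hac] at ht
    exact ENNReal.ofReal_ne_top ht
  · intro hac
    rw [KL, if_neg (fun hc => hac hc.1)]

end KLAux

section KLEmp

variable {X : Type*} [Fintype X] [MeasurableSpace X] [MeasurableSingletonClass X]

lemma empMeas_toReal {n : ℕ} (x₀ : Fin n → X) (a : X) :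
    (empMeas x₀ {a}).toReal = (cnt x₀ a : ℝ) / n := by
  rw [empMeas_apply, ENNReal.toReal_div]
  simp

lemma cnt_ne_zero_of_ne {n : ℕ} (x₀ : Fin n → X) (a : X) (h : empMeas x₀ {a} ≠ 0) :
    cnt x₀ a ≠ 0 := by
  intro h0
  rw [empMeas_apply, h0] at h
  simp at h

lemma empMeas_ne_zero_of_cnt {n : ℕ} (hn : n ≠ 0) (x₀ : Fin n → X) (a : X)
    (h : cnt x₀ a ≠ 0) : empMeas x₀ {a} ≠ 0 := by
  rw [empMeas_apply]
  simp only [ne_eq, ENNReal.div_eq_zero_iff]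
  push_neg
  exact ⟨by exact_mod_cast h, ENNReal.natCast_ne_top n⟩

lemma G_eq_of_ac {n : ℕ} (hn : n ≠ 0) (P : Measure X) [IsProbabilityMeasure P]
    (x₀ : Fin n → X) (h : empMeas x₀ ≪ P) :
    ∏ a, (P {a} / empMeas x₀ {a}) ^ cnt x₀ a
      = ENNReal.ofReal (Real.exp (-(n : ℝ) * (KL (empMeas x₀) P).toReal)) := by
  classical
  haveI : IsProbabilityMeasure (empMeas x₀) := empMeas_isProb hn x₀
  set R := empMeas x₀ with hR
  set k := cnt x₀ with hk
  set p : X → ℝ := fun a => (P {a}).toReal with hp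
  set ρ : X → ℝ := fun a => (R {a}).toReal with hρ
  have hKL : (KL R P).toReal = ∑ a, ρ a * Real.log (ρ a / p a) := by
    rw [KL_eq_of_ac h, ENNReal.toReal_ofReal (gibbs_nonneg R P h)]
  have hpos : ∀ a, k a ≠ 0 → 0 < ρ a ∧ 0 < p a := by
    intro a hka
    have hR0 : R {a} ≠ 0 := empMeas_ne_zero_of_cnt hn x₀ a hka
    have hP0 : P {a} ≠ 0 := fun hc => hR0 (h hc)
    exact ⟨ENNReal.toReal_pos hR0 (measure_ne_top _ _),
      ENNReal.toReal_pos hP0 (measure_ne_top _ _)⟩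
  have hρval : ∀ a, ρ a = (k a : ℝ) / n := fun a => empMeas_toReal x₀ a
  have hnn : (n : ℝ) ≠ 0 := Nat.cast_ne_zero.2 hn
  have hstep1 : -(n : ℝ) * (KL R P).toReal = ∑ a, (k a : ℝ) * Real.log (p a / ρ a) := by
    rw [hKL, Finset.mul_sum]
    refine Finset.sum_congr rfl fun a _ => ?_
    rcases eq_or_ne (k a) 0 with h0 | h0
    · have hz : ρ a = 0 := by rw [hρval, h0]; simp
      simp [hz, h0]
    · have hnρ : (n : ℝ) * ρ a = k a := by
        rw [hρval]; field_simp
      have hflip : Real.log (p a / ρ a) = -Real.log (ρ a / p a) := by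
        rw [← Real.log_inv, inv_div]
      rw [hflip, ← hnρ]
      ring
  have hstep2 : Real.exp (-(n : ℝ) * (KL R P).toReal) = ∏ a, (p a / ρ a) ^ k a := by
    rw [hstep1, Real.exp_sum]
    refine Finset.prod_congr rfl fun a _ => ?_
    rcases eq_or_ne (k a) 0 with h0 | h0
    · simp [h0]
    · obtain ⟨hρ0, hp0⟩ := hpos a h0
      rw [Real.exp_nat_mul, Real.exp_log (show (0:ℝ) < p a / ρ a by positivity)]
  rw [hstep2, ENNReal.ofReal_prod_of_nonneg (fun a _ => by positivity)]
  refine (Finset.prod_congr rfl fun a _ => ?_).symm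
  rcases eq_or_ne (k a) 0 with h0 | h0
  · simp [h0]
  · obtain ⟨hρ0, hp0⟩ := hpos a h0
    rw [ENNReal.ofReal_pow (by positivity), ENNReal.ofReal_div_of_pos hρ0,
      ENNReal.ofReal_toReal (measure_ne_top _ _), ENNReal.ofReal_toReal (measure_ne_top _ _)]

lemma G_eq_zero_of_top {n : ℕ} (hn : n ≠ 0) (P : Measure X) [IsProbabilityMeasure P]
    (x₀ : Fin n → X) (h : KL (empMeas x₀) P = ⊤) :
    ∏ a, (P {a} / empMeas x₀ {a}) ^ cnt x₀ a = 0 := by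
  haveI : IsProbabilityMeasure (empMeas x₀) := empMeas_isProb hn x₀
  obtain ⟨a, hPa, hRa⟩ := not_abscont_iff.1 (KL_eq_top_iff.1 h)
  refine Finset.prod_eq_zero (Finset.mem_univ a) ?_
  rw [hPa, ENNReal.zero_div]
  exact zero_pow (cnt_ne_zero_of_ne x₀ a hRa)

end KLEmp

section MainBound

variable {X : Type*} [Fintype X] [MeasurableSpace X] [MeasurableSingletonClass X]

lemma cnt_le {n : ℕ} (x : Fin n → X) (a : X) : cnt x a ≤ n := by
  calc cnt x a ≤ (Finset.univ : Finset (Fin n)).card := Finset.card_filter_le _ _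
    _ = n := by simp

lemma card_image_empProb {n : ℕ} (hn : n ≠ 0) :
    (Finset.univ.image (fun x : Fin n → X => empProb hn x)).card
      ≤ (n + 1) ^ Fintype.card X := by
  classical
  set t : Finset (X → ℝ≥0∞) :=
    (Finset.univ : Finset (X → Fin (n + 1))).image (fun k a => (k a : ℝ≥0∞) / n) with ht
  have h1 : (Finset.univ.image (fun x : Fin n → X => empProb hn x)).card ≤ t.card := by
    refine Finset.card_le_card_of_injOn (fun ν => fun a => (ν : Measure X) {a}) ?_ ?_
    · intro ν hν
      obtain ⟨x, _, rfl⟩ := Finset.mem_image.1 hν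
      refine Finset.mem_image.2 ⟨fun a => ⟨cnt x a, Nat.lt_succ_of_le (cnt_le x a)⟩,
        Finset.mem_univ _, ?_⟩
      funext a
      exact (empMeas_apply x a).symm
    · intro ν _ ν' _ hfun
      ext s hs
      have : ∀ a, (ν : Measure X) {a} = (ν' : Measure X) {a} := fun a => congrFun hfun a
      have hmeq : (ν : Measure X) = (ν' : Measure X) := Measure.ext_iff_singleton.2 this
      rw [hmeq]
  have h2 : t.card ≤ Fintype.card (X → Fin (n + 1)) := by
    calc t.card ≤ (Finset.univ : Finset (X → Fin (n + 1))).card := Finset.card_image_le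
      _ = _ := Finset.card_univ
  calc _ ≤ Fintype.card (X → Fin (n + 1)) := le_trans h1 h2
    _ = (n + 1) ^ Fintype.card X := by rw [Fintype.card_fun]; simp

lemma main_bound (P Q : Measure X) [IsProbabilityMeasure P] [IsProbabilityMeasure Q]
    {n m : ℕ} (hn : n ≠ 0) (hm : m ≠ 0)
    (Γ : Set (ProbabilityMeasure X × ProbabilityMeasure X)) (ρ : ℝ)
    (hρ : ∀ ν μ : ProbabilityMeasure X, (ν, μ) ∈ Γ →
      KL (ν : Measure X) P ≠ ⊤ → KL (μ : Measure X) Q ≠ ⊤ →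
      ((n : ℝ) + m) * ρ ≤ n * (KL (ν : Measure X) P).toReal + m * (KL (μ : Measure X) Q).toReal) :
    ((Measure.pi fun _ : Fin n => P).prod (Measure.pi fun _ : Fin m => Q))
        {xy : (Fin n → X) × (Fin m → X) | (empProb hn xy.1, empProb hm xy.2) ∈ Γ}
      ≤ (((n + 1) ^ Fintype.card X * (m + 1) ^ Fintype.card X : ℕ) : ℝ≥0∞) *
          ENNReal.ofReal (Real.exp (-(((n : ℝ) + m) * ρ))) := by
  classical
  set Bd : ℝ≥0∞ := ENNReal.ofReal (Real.exp (-(((n : ℝ) + m) * ρ))) with hBd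
  set pP : (Fin n → X) → ℝ≥0∞ := fun x => (Measure.pi fun _ : Fin n => P) {x} with hpP
  set pQ : (Fin m → X) → ℝ≥0∞ := fun y => (Measure.pi fun _ : Fin m => Q) {y} with hpQ
  set img₁ := Finset.univ.image (fun x : Fin n → X => empProb hn x) with himg₁
  set img₂ := Finset.univ.image (fun y : Fin m → X => empProb hm y) with himg₂
  set fib₁ : ProbabilityMeasure X → Finset (Fin n → X) :=
    fun ν => Finset.univ.filter (fun x => empProb hn x = ν) with hfib₁
  set fib₂ : ProbabilityMeasure X → Finset (Fin m → X) :=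
    fun μ => Finset.univ.filter (fun y => empProb hm y = μ) with hfib₂
  set A : ProbabilityMeasure X → ℝ≥0∞ := fun ν => ∑ x ∈ fib₁ ν, pP x with hA
  set B : ProbabilityMeasure X → ℝ≥0∞ := fun μ => ∑ y ∈ fib₂ μ, pQ y with hB
  -- step 0 : the measure as a double sum
  have h0 : ((Measure.pi fun _ : Fin n => P).prod (Measure.pi fun _ : Fin m => Q))
      {xy : (Fin n → X) × (Fin m → X) | (empProb hn xy.1, empProb hm xy.2) ∈ Γ}
      = ∑ x : Fin n → X, ∑ y : Fin m → X,
          (if (empProb hn x, empProb hm y) ∈ Γ then pP x * pQ y else 0) := by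
    rw [meas_set_eq_sum]
    rw [Set.toFinset_setOf]
    rw [Finset.sum_filter]
    rw [Fintype.sum_prod_type]
    refine Finset.sum_congr rfl fun x _ => Finset.sum_congr rfl fun y _ => ?_
    congr 1
    rw [← Set.singleton_prod_singleton, Measure.prod_prod]
  -- step 1 : regroup by types
  have key : ∀ ν ∈ img₁,
      ∑ x ∈ fib₁ ν, ∑ y : Fin m → X,
          (if (empProb hn x, empProb hm y) ∈ Γ then pP x * pQ y else 0)
        = ∑ μ ∈ img₂, (if (ν, μ) ∈ Γ then A ν * B μ else 0) := by
    intro ν _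
    have hx : ∀ x ∈ fib₁ ν, ∑ y : Fin m → X,
        (if (empProb hn x, empProb hm y) ∈ Γ then pP x * pQ y else 0)
        = ∑ y : Fin m → X, (if (ν, empProb hm y) ∈ Γ then pP x * pQ y else 0) := by
      intro x hx
      have : empProb hn x = ν := (Finset.mem_filter.1 hx).2
      rw [this]
    rw [Finset.sum_congr rfl hx, Finset.sum_comm]
    have hy : ∀ y : Fin m → X,
        ∑ x ∈ fib₁ ν, (if (ν, empProb hm y) ∈ Γ then pP x * pQ y else 0)
        = if (ν, empProb hm y) ∈ Γ then A ν * pQ y else 0 := by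
      intro y
      by_cases hΓ : (ν, empProb hm y) ∈ Γ
      · simp only [hΓ, if_true, hA, Finset.sum_mul]
      · simp [hΓ]
    rw [Finset.sum_congr rfl fun y _ => hy y]
    rw [← Finset.sum_fiberwise_of_maps_to (g := fun y : Fin m → X => empProb hm y)
      (t := img₂) (fun y _ => Finset.mem_image_of_mem _ (Finset.mem_univ y))]
    refine Finset.sum_congr rfl fun μ hμ => ?_
    have hy2 : ∀ y ∈ Finset.filter (fun y : Fin m → X => empProb hm y = μ) Finset.univ,
        (if (ν, empProb hm y) ∈ Γ then A ν * pQ y else 0)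
        = if (ν, μ) ∈ Γ then A ν * pQ y else 0 := by
      intro y hy'
      rw [(Finset.mem_filter.1 hy').2]
    rw [Finset.sum_congr rfl hy2]
    by_cases hΓ : (ν, μ) ∈ Γ
    · simp only [hΓ, if_true, hB, ← Finset.mul_sum, hfib₂]
    · simp [hΓ]
  have h1 : ((Measure.pi fun _ : Fin n => P).prod (Measure.pi fun _ : Fin m => Q))
      {xy : (Fin n → X) × (Fin m → X) | (empProb hn xy.1, empProb hm xy.2) ∈ Γ}
      = ∑ ν ∈ img₁, ∑ μ ∈ img₂, (if (ν, μ) ∈ Γ then A ν * B μ else 0) := by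
    rw [h0, ← Finset.sum_fiberwise_of_maps_to (g := fun x : Fin n → X => empProb hn x)
      (t := img₁) (fun x _ => Finset.mem_image_of_mem _ (Finset.mem_univ x))]
    exact Finset.sum_congr rfl key
  -- step 2 : bound each term
  have h2 : ∀ ν ∈ img₁, ∀ μ ∈ img₂, (if (ν, μ) ∈ Γ then A ν * B μ else 0) ≤ Bd := by
    intro ν hν μ hμ
    by_cases hΓ : (ν, μ) ∈ Γ
    · rw [if_pos hΓ]
      obtain ⟨x₀, _, rfl⟩ := Finset.mem_image.1 hν
      obtain ⟨y₀, _, rfl⟩ := Finset.mem_image.1 hμ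
      have hAb : A (empProb hn x₀) ≤ ∏ a, (P {a} / empMeas x₀ {a}) ^ cnt x₀ a :=
        typeClass_bound hn P x₀
      have hBb : B (empProb hm y₀) ≤ ∏ a, (Q {a} / empMeas y₀ {a}) ^ cnt y₀ a :=
        typeClass_bound hm Q y₀
      have hcoe1 : (empProb hn x₀ : Measure X) = empMeas x₀ := rfl
      have hcoe2 : (empProb hm y₀ : Measure X) = empMeas y₀ := rfl
      by_cases ht1 : KL (empMeas x₀) P = ⊤
      · have := G_eq_zero_of_top hn P x₀ ht1
        rw [this] at hAb
        have : A (empProb hn x₀) = 0 := le_antisymm hAb zero_le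
        rw [this, zero_mul]
        exact zero_le
      by_cases ht2 : KL (empMeas y₀) Q = ⊤
      · have := G_eq_zero_of_top hm Q y₀ ht2
        rw [this] at hBb
        have : B (empProb hm y₀) = 0 := le_antisymm hBb zero_le
        rw [this, mul_zero]
        exact zero_le
      have hac1 : empMeas x₀ ≪ P := by
        haveI : IsProbabilityMeasure (empMeas x₀) := empMeas_isProb hn x₀
        by_contra hc
        exact ht1 (KL_eq_top_iff.2 hc)
      have hac2 : empMeas y₀ ≪ Q := by
        haveI : IsProbabilityMeasure (empMeas y₀) := empMeas_isProb hm y₀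
        by_contra hc
        exact ht2 (KL_eq_top_iff.2 hc)
      rw [G_eq_of_ac hn P x₀ hac1] at hAb
      rw [G_eq_of_ac hm Q y₀ hac2] at hBb
      calc A (empProb hn x₀) * B (empProb hm y₀)
          ≤ ENNReal.ofReal (Real.exp (-(n : ℝ) * (KL (empMeas x₀) P).toReal)) *
            ENNReal.ofReal (Real.exp (-(m : ℝ) * (KL (empMeas y₀) Q).toReal)) :=
            mul_le_mul' hAb hBb
        _ = ENNReal.ofReal (Real.exp (-(n : ℝ) * (KL (empMeas x₀) P).toReal +
              -(m : ℝ) * (KL (empMeas y₀) Q).toReal)) := by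
            rw [Real.exp_add, ENNReal.ofReal_mul (Real.exp_nonneg _)]
        _ ≤ Bd := by
            rw [hBd]
            refine ENNReal.ofReal_le_ofReal (Real.exp_le_exp.2 ?_)
            have := hρ (empProb hn x₀) (empProb hm y₀) hΓ (by rw [hcoe1]; exact ht1)
              (by rw [hcoe2]; exact ht2)
            rw [hcoe1, hcoe2] at this
            linarith
    · rw [if_neg hΓ]
      exact zero_le
  -- step 3 : count the terms
  rw [h1]
  calc ∑ ν ∈ img₁, ∑ μ ∈ img₂, (if (ν, μ) ∈ Γ then A ν * B μ else 0)
      ≤ ∑ _ν ∈ img₁, ∑ _μ ∈ img₂, Bd :=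
        Finset.sum_le_sum fun ν hν => Finset.sum_le_sum fun μ hμ => h2 ν hν μ hμ
    _ = (img₁.card : ℝ≥0∞) * ((img₂.card : ℝ≥0∞) * Bd) := by
        simp [Finset.sum_const, nsmul_eq_mul, mul_assoc]
    _ ≤ (((n + 1) ^ Fintype.card X : ℕ) : ℝ≥0∞) *
          ((((m + 1) ^ Fintype.card X : ℕ) : ℝ≥0∞) * Bd) := by
        refine mul_le_mul' (by exact_mod_cast Nat.cast_le.2 (card_image_empProb hn)) ?_
        exact mul_le_mul' (by exact_mod_cast Nat.cast_le.2 (card_image_empProb hm)) le_rfl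
    _ = _ := by
        rw [← mul_assoc]
        congr 1
        rw [← Nat.cast_mul]

end MainBound

section FinalAux

lemma real_arith (c δ x y Ir α : ℝ) (hc0 : 0 < c) (hc1 : c < 1) (hδ0 : 0 < δ) (hδ1 : δ < 1)
    (hα : |α - c| < δ * min c (1 - c)) (hx : 0 ≤ x) (hy : 0 ≤ y)
    (hIr : Ir ≤ c * x + (1 - c) * y) :
    (1 - δ) * Ir ≤ α * x + (1 - α) * y := by
  obtain ⟨hα1, hα2⟩ := abs_lt.1 hα
  have hm1 : min c (1 - c) ≤ c := min_le_left _ _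
  have hm2 : min c (1 - c) ≤ 1 - c := min_le_right _ _
  have hmin0 : 0 < min c (1 - c) := lt_min hc0 (by linarith)
  have h1 : (1 - δ) * c ≤ α := by nlinarith
  have h2 : (1 - δ) * (1 - c) ≤ 1 - α := by nlinarith
  have e1 : (1 - δ) * c * x ≤ α * x := mul_le_mul_of_nonneg_right h1 hx
  have e2 : (1 - δ) * (1 - c) * y ≤ (1 - α) * y := mul_le_mul_of_nonneg_right h2 hy
  nlinarith [mul_le_mul_of_nonneg_left hIr (by linarith : (0:ℝ) ≤ 1 - δ)]

/-- the polynomial-times-exponential smallness fact -/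
lemma poly_exp_small (d : ℕ) (r ρ : ℝ) (hrρ : r < ρ) (n m : ℕ → ℕ)
    (hn' : Filter.Tendsto n Filter.atTop Filter.atTop) :
    ∀ᶠ t in Filter.atTop,
      (((n t + 1) ^ d * (m t + 1) ^ d : ℕ) : ℝ) * Real.exp (-(((n t : ℝ) + m t) * ρ))
        < Real.exp (-(((n t : ℝ) + m t) * r)) := by
  have hb : 0 < ρ - r := by linarith
  set s : ℕ → ℝ := fun t => (n t : ℝ) + m t with hs
  have hst : Filter.Tendsto s Filter.atTop Filter.atTop := by
    apply Filter.tendsto_atTop_mono (fun t => ?_) (tendsto_natCast_atTop_atTop.comp hn')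
    simp only [Function.comp_apply, hs]
    have : (0:ℝ) ≤ (m t : ℝ) := Nat.cast_nonneg _
    linarith
  have h0 : Filter.Tendsto (fun z : ℝ => z ^ (2 * d) * Real.exp (-(ρ - r) * z))
      Filter.atTop (nhds 0) := by
    have := tendsto_rpow_mul_exp_neg_mul_atTop_nhds_zero ((2 * d : ℕ) : ℝ) (ρ - r) hb
    refine this.congr fun z => ?_
    rw [Real.rpow_natCast]
  have h1 : Filter.Tendsto (fun t => (s t + 1) ^ (2 * d) * Real.exp (-(ρ - r) * (s t + 1)))
      Filter.atTop (nhds 0) :=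
    h0.comp (Filter.tendsto_atTop_add_const_right Filter.atTop 1 hst)
  have h2 : Filter.Tendsto (fun t => (s t + 1) ^ (2 * d) * Real.exp (-(ρ - r) * s t))
      Filter.atTop (nhds 0) := by
    have := h1.mul_const (Real.exp (ρ - r))
    rw [zero_mul] at this
    refine this.congr fun t => ?_
    rw [mul_assoc, ← Real.exp_add]
    ring_nf
  filter_upwards [h2.eventually_lt_const (by norm_num : (0:ℝ) < 1)] with t ht
  have hC : (((n t + 1) ^ d * (m t + 1) ^ d : ℕ) : ℝ) ≤ (s t + 1) ^ (2 * d) := by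
    push_cast
    have hn1 : ((n t : ℝ) + 1) ≤ s t + 1 := by
      simp only [hs]
      have : (0:ℝ) ≤ m t := Nat.cast_nonneg _
      linarith
    have hm1 : ((m t : ℝ) + 1) ≤ s t + 1 := by
      simp only [hs]
      have : (0:ℝ) ≤ n t := Nat.cast_nonneg _
      linarith
    have p1 : ((n t : ℝ) + 1) ^ d ≤ (s t + 1) ^ d := pow_le_pow_left₀ (by positivity) hn1 d
    have p2 : ((m t : ℝ) + 1) ^ d ≤ (s t + 1) ^ d := pow_le_pow_left₀ (by positivity) hm1 d
    calc ((n t : ℝ) + 1) ^ d * ((m t : ℝ) + 1) ^ d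
        ≤ (s t + 1) ^ d * (s t + 1) ^ d :=
          mul_le_mul p1 p2 (by positivity) (by positivity)
      _ = (s t + 1) ^ (2 * d) := by rw [← pow_add]; ring_nf
  have hexp : Real.exp (-(s t * ρ)) = Real.exp (-(ρ - r) * s t) * Real.exp (-(s t * r)) := by
    rw [← Real.exp_add]
    ring_nf
  calc (((n t + 1) ^ d * (m t + 1) ^ d : ℕ) : ℝ) * Real.exp (-(s t * ρ))
      = ((((n t + 1) ^ d * (m t + 1) ^ d : ℕ) : ℝ) * Real.exp (-(ρ - r) * s t)) *
          Real.exp (-(s t * r)) := by rw [hexp]; ring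
    _ ≤ ((s t + 1) ^ (2 * d) * Real.exp (-(ρ - r) * s t)) * Real.exp (-(s t * r)) := by
        have := mul_le_mul_of_nonneg_right hC (Real.exp_nonneg (-(ρ - r) * s t))
        exact mul_le_mul_of_nonneg_right this (Real.exp_nonneg _)
    _ < 1 * Real.exp (-(s t * r)) := mul_lt_mul_of_pos_right ht (Real.exp_pos _)
    _ = Real.exp (-(s t * r)) := one_mul _

end FinalAux

section FinalStep

variable {X : Type*} [Fintype X] [MeasurableSpace X] [MeasurableSingletonClass X]

lemma coef_neg {n m : ℕ} (hn : n ≠ 0) : (-(1 / ((n : ℝ) + m)) : ℝ) < 0 := by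
  have h1 : (0:ℝ) < (n:ℝ) := by exact_mod_cast Nat.pos_of_ne_zero hn
  have h2 : (0:ℝ) ≤ (m:ℝ) := Nat.cast_nonneg _
  have : (0:ℝ) < (n:ℝ) + m := by linarith
  simp only [neg_neg, neg_lt_zero]  -- maybe wrong; fallback
  positivity

lemma nonneg_step (P Q : Measure X) [IsProbabilityMeasure P] [IsProbabilityMeasure Q]
    {n m : ℕ} (hn : n ≠ 0) (hm : m ≠ 0)
    (Γ : Set (ProbabilityMeasure X × ProbabilityMeasure X)) :
    (0 : EReal) ≤ ((-(1 / ((n : ℝ) + m)) : ℝ) : EReal) *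
      elog (((Measure.pi fun _ : Fin n => P).prod (Measure.pi fun _ : Fin m => Q))
        {xy : (Fin n → X) × (Fin m → X) | (empProb hn xy.1, empProb hm xy.2) ∈ Γ}) := by
  set p := ((Measure.pi fun _ : Fin n => P).prod (Measure.pi fun _ : Fin m => Q))
    {xy : (Fin n → X) × (Fin m → X) | (empProb hn xy.1, empProb hm xy.2) ∈ Γ} with hp
  have hple : p ≤ 1 := prob_le_one
  have hpne : p ≠ ⊤ := (hple.trans_lt ENNReal.one_lt_top).ne
  rcases eq_or_ne p 0 with h0 | h0
  · rw [h0, show elog 0 = ⊥ by simp [elog], EReal.coe_mul_bot_of_neg (coef_neg hn)]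
    exact le_top
  · simp only [elog, if_neg h0, if_neg hpne]
    rw [← EReal.coe_mul]
    have hlog : Real.log p.toReal ≤ 0 :=
      Real.log_nonpos ENNReal.toReal_nonneg
        (by simpa using ENNReal.toReal_mono ENNReal.one_ne_top hple)
    have hcoef := coef_neg (m := m) hn
    have : (0:ℝ) ≤ -(1 / ((n : ℝ) + m)) * Real.log p.toReal := by nlinarith
    exact_mod_cast this

lemma final_step (P Q : Measure X) [IsProbabilityMeasure P] [IsProbabilityMeasure Q]
    {n m : ℕ} (hn : n ≠ 0) (hm : m ≠ 0)
    (Γ : Set (ProbabilityMeasure X × ProbabilityMeasure X)) (r ρ : ℝ)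
    (hcond : ∀ ν μ : ProbabilityMeasure X, (ν, μ) ∈ Γ →
      KL (ν : Measure X) P ≠ ⊤ → KL (μ : Measure X) Q ≠ ⊤ →
      ((n : ℝ) + m) * ρ ≤ n * (KL (ν : Measure X) P).toReal + m * (KL (μ : Measure X) Q).toReal)
    (hsmall : (((n + 1) ^ Fintype.card X * (m + 1) ^ Fintype.card X : ℕ) : ℝ) *
        Real.exp (-(((n : ℝ) + m) * ρ)) < Real.exp (-(((n : ℝ) + m) * r))) :
    (r : EReal) < ((-(1 / ((n : ℝ) + m)) : ℝ) : EReal) *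
      elog (((Measure.pi fun _ : Fin n => P).prod (Measure.pi fun _ : Fin m => Q))
        {xy : (Fin n → X) × (Fin m → X) | (empProb hn xy.1, empProb hm xy.2) ∈ Γ}) := by
  have hbound := main_bound P Q hn hm Γ ρ hcond
  set p := ((Measure.pi fun _ : Fin n => P).prod (Measure.pi fun _ : Fin m => Q))
    {xy : (Fin n → X) × (Fin m → X) | (empProb hn xy.1, empProb hm xy.2) ∈ Γ} with hp
  have hple : p ≤ 1 := prob_le_one
  have hpne : p ≠ ⊤ := (hple.trans_lt ENNReal.one_lt_top).ne
  have hSt : (0:ℝ) < (n : ℝ) + m := by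
    have h1 : (0:ℝ) < (n:ℝ) := by exact_mod_cast Nat.pos_of_ne_zero hn
    have h2 : (0:ℝ) ≤ (m:ℝ) := Nat.cast_nonneg _
    linarith
  rcases eq_or_ne p 0 with h0 | h0
  · rw [h0, show elog 0 = ⊥ by simp [elog], EReal.coe_mul_bot_of_neg (coef_neg hn)]
    exact EReal.coe_lt_top r
  · simp only [elog, if_neg h0, if_neg hpne]
    rw [← EReal.coe_mul, EReal.coe_lt_coe_iff]
    have hppos : 0 < p.toReal := ENNReal.toReal_pos h0 hpne
    have hple2 : p.toReal ≤ (((n + 1) ^ Fintype.card X * (m + 1) ^ Fintype.card X : ℕ) : ℝ) *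
        Real.exp (-(((n : ℝ) + m) * ρ)) := by
      refine ENNReal.toReal_le_of_le_ofReal (by positivity) ?_
      rw [ENNReal.ofReal_mul (by positivity), ENNReal.ofReal_natCast]
      exact hbound
    have hlt : p.toReal < Real.exp (-(((n : ℝ) + m) * r)) := lt_of_le_of_lt hple2 hsmall
    have hlog : Real.log p.toReal < -(((n : ℝ) + m) * r) := (Real.log_lt_iff_lt_exp hppos).2 hlt
    have hmul := mul_lt_mul_of_pos_left hlog (one_div_pos.2 hSt)
    have hid : (1 / ((n : ℝ) + m)) * (((n : ℝ) + m) * r) = r := by field_simp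
    nlinarith [hmul, hid]

end FinalStep


/-- **Extended Sanov theorem, finite sample space, lower bound.** -/
theorem extended_sanov_finite_lower
    {X : Type*} [Fintype X] [TopologicalSpace X] [DiscreteTopology X]
    [MeasurableSpace X] [BorelSpace X]
    (P Q : Measure X) [IsProbabilityMeasure P] [IsProbabilityMeasure Q]
    (n m : ℕ → ℕ) (hn : ∀ t, 0 < n t) (hm : ∀ t, 0 < m t)
    (hn' : Tendsto n atTop atTop) (hm' : Tendsto m atTop atTop)
    (c : ℝ) (hc0 : 0 < c) (hc1 : c < 1)
    (hc : Tendsto (fun t => (n t : ℝ) / ((n t : ℝ) + (m t : ℝ))) atTop (nhds c))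
    (Γ : Set (ProbabilityMeasure X × ProbabilityMeasure X)) :
    Filter.liminf (fun t =>
        ((-(1 / ((n t : ℝ) + (m t : ℝ))) : ℝ) : EReal) *
          elog (((Measure.pi fun _ : Fin (n t) => P).prod (Measure.pi fun _ : Fin (m t) => Q))
            {xy : (Fin (n t) → X) × (Fin (m t) → X) |
              (empProb (hn t).ne' xy.1, empProb (hm t).ne' xy.2) ∈ Γ})) atTop
      ≥ ((⨅ RS ∈ Γ,
            ENNReal.ofReal c * KL (RS.1 : Measure X) P
              + ENNReal.ofReal (1 - c) * KL (RS.2 : Measure X) Q : ℝ≥0∞) : EReal) := by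
  classical
  haveI msX : MeasurableSingletonClass X :=
    ⟨fun a => (isOpen_discrete ({a} : Set X)).measurableSet⟩
  set I : ℝ≥0∞ := ⨅ RS ∈ Γ, ENNReal.ofReal c * KL (RS.1 : Measure X) P
      + ENNReal.ofReal (1 - c) * KL (RS.2 : Measure X) Q with hI
  rw [ge_iff_le]
  refine (le_liminf_iff ?_ ?_).2 ?_
  · isBoundedDefault
  · isBoundedDefault
  intro b hb
  rcases lt_or_ge b 0 with hb0 | hb0
  · exact Filter.Eventually.of_forall fun t =>
      lt_of_lt_of_le hb0 (nonneg_step P Q (hn t).ne' (hm t).ne' Γ)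
  have hbt : b ≠ ⊤ := hb.ne_top
  have hbb : b ≠ ⊥ := by
    intro h
    rw [h] at hb0
    exact absurd hb0 (by simp)
  set r := b.toReal with hr
  have hbr : b = (r : EReal) := (EReal.coe_toReal hbt hbb).symm
  have hr0 : 0 ≤ r := by
    rw [hbr] at hb0
    exact_mod_cast hb0
  have hkey : ∃ ρ : ℝ, r < ρ ∧ ∀ᶠ t in atTop,
      (∀ ν μ : ProbabilityMeasure X, (ν, μ) ∈ Γ →
        KL (ν : Measure X) P ≠ ⊤ → KL (μ : Measure X) Q ≠ ⊤ →
        ((n t : ℝ) + m t) * ρ ≤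
          (n t : ℝ) * (KL (ν : Measure X) P).toReal
            + (m t : ℝ) * (KL (μ : Measure X) Q).toReal) := by
    rcases eq_or_ne I ⊤ with hIt | hIt
    · refine ⟨r + 1, by linarith, Filter.Eventually.of_forall fun t ν μ hmem h1 h2 => ?_⟩
      exfalso
      have hle : I ≤ ENNReal.ofReal c * KL (ν : Measure X) P
          + ENNReal.ofReal (1 - c) * KL (μ : Measure X) Q := by
        rw [hI]
        exact iInf₂_le (ν, μ) hmem
      rw [hIt, top_le_iff] at hle
      exact (ENNReal.add_ne_top.2 ⟨ENNReal.mul_ne_top ENNReal.ofReal_ne_top h1,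
        ENNReal.mul_ne_top ENNReal.ofReal_ne_top h2⟩) hle
    · have hne1 : ((I : ℝ≥0∞) : EReal) ≠ ⊤ := by
        simp only [ne_eq, EReal.coe_ennreal_eq_top_iff]
        exact hIt
      have hne2 : ((I : ℝ≥0∞) : EReal) ≠ ⊥ := by simp
      have hcoe : ((I.toReal : ℝ) : EReal) = ((I : ℝ≥0∞) : EReal) := by
        rw [show (I.toReal : ℝ) = ((I : ℝ≥0∞) : EReal).toReal by
          rw [EReal.toReal_coe_ennreal]]
        exact EReal.coe_toReal hne1 hne2
      have hrIr : r < I.toReal := by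
        rw [hbr, ← hcoe] at hb
        exact_mod_cast hb
      set Ir := I.toReal with hIr
      have hIr0 : 0 < Ir := lt_of_le_of_lt hr0 hrIr
      set ρ := (r + Ir) / 2 with hρ
      have hrρ : r < ρ := by rw [hρ]; linarith
      have hρIr : ρ < Ir := by rw [hρ]; linarith
      set δ := (Ir - ρ) / Ir with hδ
      have hδ0 : 0 < δ := div_pos (by linarith) hIr0
      have hδ1 : δ < 1 := by
        rw [hδ, div_lt_one hIr0]
        linarith
      have h1δ : (1 - δ) * Ir = ρ := by
        rw [hδ]
        field_simp
        ring
      have hεpos : 0 < δ * min c (1 - c) := mul_pos hδ0 (lt_min hc0 (by linarith))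
      have hev := (Metric.tendsto_nhds.mp hc) _ hεpos
      refine ⟨ρ, hrρ, ?_⟩
      filter_upwards [hev] with t ht
      intro ν μ hmem h1 h2
      have hle : I ≤ ENNReal.ofReal c * KL (ν : Measure X) P
          + ENNReal.ofReal (1 - c) * KL (μ : Measure X) Q := by
        rw [hI]
        exact iInf₂_le (ν, μ) hmem
      have hfin1 : ENNReal.ofReal c * KL (ν : Measure X) P ≠ ⊤ :=
        ENNReal.mul_ne_top ENNReal.ofReal_ne_top h1
      have hfin2 : ENNReal.ofReal (1 - c) * KL (μ : Measure X) Q ≠ ⊤ :=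
        ENNReal.mul_ne_top ENNReal.ofReal_ne_top h2
      have hIrle : Ir ≤ c * (KL (ν : Measure X) P).toReal
          + (1 - c) * (KL (μ : Measure X) Q).toReal := by
        have := ENNReal.toReal_mono (ENNReal.add_ne_top.2 ⟨hfin1, hfin2⟩) hle
        rwa [ENNReal.toReal_add hfin1 hfin2, ENNReal.toReal_mul, ENNReal.toReal_mul,
          ENNReal.toReal_ofReal hc0.le, ENNReal.toReal_ofReal (by linarith : (0:ℝ) ≤ 1 - c)]
          at this
      set α := (n t : ℝ) / ((n t : ℝ) + (m t : ℝ)) with hα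
      have habs : |α - c| < δ * min c (1 - c) := by
        rw [← Real.dist_eq]
        exact ht
      have harith := real_arith c δ _ _ Ir α hc0 hc1 hδ0 hδ1 habs
        ENNReal.toReal_nonneg ENNReal.toReal_nonneg hIrle
      rw [h1δ] at harith
      have hSt : (0:ℝ) < (n t : ℝ) + m t := by
        have h1' : (0:ℝ) < (n t : ℝ) := by exact_mod_cast hn t
        have h2' : (0:ℝ) ≤ (m t : ℝ) := Nat.cast_nonneg _
        linarith
      have hα1 : ((n t : ℝ) + m t) * α = n t := by
        rw [hα]
        field_simp
      have hα2 : ((n t : ℝ) + m t) * (1 - α) = m t := by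
        rw [hα]
        field_simp
        ring
      calc ((n t : ℝ) + m t) * ρ
          ≤ ((n t : ℝ) + m t) * (α * (KL (ν : Measure X) P).toReal
              + (1 - α) * (KL (μ : Measure X) Q).toReal) :=
            mul_le_mul_of_nonneg_left harith hSt.le
        _ = (n t : ℝ) * (KL (ν : Measure X) P).toReal
              + (m t : ℝ) * (KL (μ : Measure X) Q).toReal := by
            rw [mul_add, ← mul_assoc, ← mul_assoc, hα1, hα2]
  obtain ⟨ρ, hrρ, hcond⟩ := hkey
  have hsmall := poly_exp_small (Fintype.card X) r ρ hrρ n m hn'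
  filter_upwards [hcond, hsmall] with t hcondt hsmallt
  rw [hbr]
  exact final_step P Q (hn t).ne' (hm t).ne' Γ r ρ hcondt hsmallt
end
end

section
/- Closure via finite partitions: Let X be a Polish space and let Γ be a set of pairs of Borel probability measures on X. For a finite measurable partition A = {A_1,…,A_t} of X, define Γ(A) = { (R,S) : there exists (R',S') ∈ Γ with R(A_i) = R'(A_i) and S(A_i) = S'(A_i) for all i = 1,…,t }. Then the closure of Γ with respect to the product of the weak convergence topologies equals the intersection, over all finite measurable partitions A of X, of the closures of Γ(A) with respect to the product of the weak convergence topologies. -/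
open MeasureTheory Filter Set
open scoped ENNReal NNReal

noncomputable section

section ClosurePartitionHelpers

open BoundedContinuousFunction Topology

variable {X : Type*} [TopologicalSpace X] [MeasurableSpace X] [OpensMeasurableSpace X]

set_option linter.unusedSectionVars false

private lemma isInducing_testEval :
    Topology.IsInducing (fun (Q : ProbabilityMeasure X) (f : X →ᵇ ℝ≥0) =>
      Q.toFiniteMeasure.testAgainstNN f) := by
  have h1 : Topology.IsInducing (ProbabilityMeasure.toFiniteMeasure (Ω := X)) := ⟨rfl⟩
  have h2 : Topology.IsInducing (FiniteMeasure.toWeakDualBCNN (Ω := X)) := ⟨rfl⟩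
  have h3 : Topology.IsInducing (fun (φ : WeakDual ℝ≥0 (X →ᵇ ℝ≥0)) (f : X →ᵇ ℝ≥0) => φ f) := ⟨rfl⟩
  exact (h3.comp h2).comp h1

private lemma nhds_sub (P : ProbabilityMeasure X) {U : Set (ProbabilityMeasure X)}
    (hU : U ∈ nhds P) :
    ∃ (F : Finset (X →ᵇ ℝ≥0)) (ε : ℝ), 0 < ε ∧
      {Q : ProbabilityMeasure X | ∀ f ∈ F,
        dist (Q.toFiniteMeasure.testAgainstNN f) (P.toFiniteMeasure.testAgainstNN f) < ε} ⊆ U := by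
  set T := fun (Q : ProbabilityMeasure X) (f : X →ᵇ ℝ≥0) => Q.toFiniteMeasure.testAgainstNN f
  rw [isInducing_testEval.nhds_eq_comap, Filter.mem_comap] at hU
  obtain ⟨V, hV, hVU⟩ := hU
  rw [nhds_pi, Filter.mem_pi] at hV
  obtain ⟨I, hIfin, s, hs, hsub⟩ := hV
  have hball : ∀ f : X →ᵇ ℝ≥0, ∃ ε : ℝ, 0 < ε ∧ Metric.ball (T P f) ε ⊆ s f := fun f =>
    Metric.mem_nhds_iff.mp (hs f)
  choose ε hεpos hεball using hball
  classical
  set F := hIfin.toFinset with hF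
  set ε0 : ℝ := if h : F.Nonempty then F.inf' h ε else 1 with hε0
  have hε0pos : 0 < ε0 := by
    rw [hε0]
    split
    · rw [Finset.lt_inf'_iff]
      exact fun f _ => hεpos f
    · exact one_pos
  have hε0le : ∀ f ∈ F, ε0 ≤ ε f := by
    intro f hf
    rw [hε0, dif_pos ⟨f, hf⟩]
    exact Finset.inf'_le _ hf
  refine ⟨F, ε0, hε0pos, fun Q hQ => hVU ?_⟩
  refine hsub fun f hfI => ?_
  have hfF : f ∈ F := hIfin.mem_toFinset.mpr hfI
  exact hεball f (lt_of_lt_of_le (hQ f hfF) (hε0le f hfF))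

private lemma nhd_mem (P : ProbabilityMeasure X) (F : Finset (X →ᵇ ℝ≥0)) {ε : ℝ} (hε : 0 < ε) :
    {Q : ProbabilityMeasure X | ∀ f ∈ F,
      dist (Q.toFiniteMeasure.testAgainstNN f) (P.toFiniteMeasure.testAgainstNN f) < ε}
        ∈ nhds P := by
  have hopen : IsOpen {Q : ProbabilityMeasure X | ∀ f ∈ F,
      dist (Q.toFiniteMeasure.testAgainstNN f) (P.toFiniteMeasure.testAgainstNN f) < ε} := by
    have : {Q : ProbabilityMeasure X | ∀ f ∈ F,
        dist (Q.toFiniteMeasure.testAgainstNN f) (P.toFiniteMeasure.testAgainstNN f) < ε}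
        = ⋂ f ∈ F, (fun Q : ProbabilityMeasure X => Q.toFiniteMeasure.testAgainstNN f) ⁻¹'
            (Metric.ball (P.toFiniteMeasure.testAgainstNN f) ε) := by
      ext Q; simp [Metric.mem_ball]
    rw [this]
    refine isOpen_biInter_finset fun f _ => ?_
    exact (((FiniteMeasure.continuous_testAgainstNN_eval f).comp
      continuous_induced_dom)).isOpen_preimage _ Metric.isOpen_ball
  exact hopen.mem_nhds (by simp [hε])

private lemma lint_le {t : ℕ} {A : Fin t → Set X}
    (hmeas : ∀ i, MeasurableSet (A i))
    (hdisj : Pairwise fun i j => Disjoint (A i) (A j))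
    (hcov : (⋃ i, A i) = Set.univ)
    {Q₁ Q₂ : ProbabilityMeasure X}
    (hagree : ∀ i, (Q₁ : Measure X) (A i) = (Q₂ : Measure X) (A i))
    (f : X →ᵇ ℝ≥0) {δ : ℝ≥0} {c : Fin t → ℝ≥0}
    (hosc : ∀ i, ∀ x ∈ A i, f x ∈ Set.Icc (c i) (c i + δ)) :
    ∫⁻ x, (f x : ℝ≥0∞) ∂(Q₁ : Measure X) ≤ ∫⁻ x, (f x : ℝ≥0∞) ∂(Q₂ : Measure X) + δ := by
  have hsplit : ∀ Q : ProbabilityMeasure X,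
      ∫⁻ x, (f x : ℝ≥0∞) ∂(Q : Measure X) = ∑ i, ∫⁻ x in A i, (f x : ℝ≥0∞) ∂(Q : Measure X) := by
    intro Q
    rw [← setLIntegral_univ, ← hcov, lintegral_iUnion hmeas hdisj, tsum_fintype]
  have hup : ∀ i, ∫⁻ x in A i, (f x : ℝ≥0∞) ∂(Q₁ : Measure X)
      ≤ ((c i : ℝ≥0∞) + δ) * (Q₁ : Measure X) (A i) := by
    intro i
    calc ∫⁻ x in A i, (f x : ℝ≥0∞) ∂(Q₁ : Measure X)
        ≤ ∫⁻ _ in A i, ((c i : ℝ≥0∞) + δ) ∂(Q₁ : Measure X) := by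
          refine setLIntegral_mono' (hmeas i) fun x hx => ?_
          have := (hosc i x hx).2
          exact_mod_cast ENNReal.coe_le_coe.mpr this
      _ = ((c i : ℝ≥0∞) + δ) * (Q₁ : Measure X) (A i) := by rw [setLIntegral_const]
  have hlow : ∀ i, (c i : ℝ≥0∞) * (Q₂ : Measure X) (A i)
      ≤ ∫⁻ x in A i, (f x : ℝ≥0∞) ∂(Q₂ : Measure X) := by
    intro i
    calc (c i : ℝ≥0∞) * (Q₂ : Measure X) (A i)
        = ∫⁻ _ in A i, (c i : ℝ≥0∞) ∂(Q₂ : Measure X) := by rw [setLIntegral_const]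
      _ ≤ ∫⁻ x in A i, (f x : ℝ≥0∞) ∂(Q₂ : Measure X) := by
          refine setLIntegral_mono' (hmeas i) fun x hx => ?_
          exact_mod_cast ENNReal.coe_le_coe.mpr (hosc i x hx).1
  have hsum2 : ∑ i, (Q₂ : Measure X) (A i) = 1 := by
    rw [← tsum_fintype (L := SummationFilter.unconditional _), ← measure_iUnion hdisj hmeas, hcov, measure_univ]
  calc ∫⁻ x, (f x : ℝ≥0∞) ∂(Q₁ : Measure X)
      = ∑ i, ∫⁻ x in A i, (f x : ℝ≥0∞) ∂(Q₁ : Measure X) := hsplit Q₁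
    _ ≤ ∑ i, ((c i : ℝ≥0∞) + δ) * (Q₂ : Measure X) (A i) := by
        refine Finset.sum_le_sum fun i _ => ?_
        rw [← hagree i]; exact hup i
    _ = ∑ i, ((c i : ℝ≥0∞) * (Q₂ : Measure X) (A i) + δ * (Q₂ : Measure X) (A i)) := by
        congr 1; ext i; ring
    _ = (∑ i, (c i : ℝ≥0∞) * (Q₂ : Measure X) (A i)) + δ * ∑ i, (Q₂ : Measure X) (A i) := by
        rw [Finset.sum_add_distrib, Finset.mul_sum]
    _ ≤ (∑ i, ∫⁻ x in A i, (f x : ℝ≥0∞) ∂(Q₂ : Measure X)) + δ * 1 := by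
        gcongr
        · exact hlow _
        · rw [hsum2]
    _ = ∫⁻ x, (f x : ℝ≥0∞) ∂(Q₂ : Measure X) + δ := by rw [mul_one, hsplit Q₂]

private lemma key_est {t : ℕ} {A : Fin t → Set X}
    (hmeas : ∀ i, MeasurableSet (A i))
    (hdisj : Pairwise fun i j => Disjoint (A i) (A j))
    (hcov : (⋃ i, A i) = Set.univ)
    {Q₁ Q₂ : ProbabilityMeasure X}
    (hagree : ∀ i, (Q₁ : Measure X) (A i) = (Q₂ : Measure X) (A i))
    (f : X →ᵇ ℝ≥0) {δ : ℝ≥0} {c : Fin t → ℝ≥0}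
    (hosc : ∀ i, ∀ x ∈ A i, f x ∈ Set.Icc (c i) (c i + δ)) :
    dist (Q₁.toFiniteMeasure.testAgainstNN f) (Q₂.toFiniteMeasure.testAgainstNN f) ≤ (δ : ℝ) := by
  have h12 := lint_le hmeas hdisj hcov hagree f hosc
  have h21 := lint_le hmeas hdisj hcov (fun i => (hagree i).symm) f hosc
  set a := Q₁.toFiniteMeasure.testAgainstNN f with ha
  set b := Q₂.toFiniteMeasure.testAgainstNN f with hb
  have hac : (a : ℝ≥0∞) = ∫⁻ x, (f x : ℝ≥0∞) ∂(Q₁ : Measure X) :=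
    FiniteMeasure.testAgainstNN_coe_eq
  have hbc : (b : ℝ≥0∞) = ∫⁻ x, (f x : ℝ≥0∞) ∂(Q₂ : Measure X) :=
    FiniteMeasure.testAgainstNN_coe_eq
  have h1 : a ≤ b + δ := by
    rw [← ENNReal.coe_le_coe, ENNReal.coe_add, hac, hbc]; exact h12
  have h2 : b ≤ a + δ := by
    rw [← ENNReal.coe_le_coe, ENNReal.coe_add, hbc, hac]; exact h21
  rw [NNReal.dist_eq, abs_sub_le_iff]
  constructor
  · have := NNReal.coe_le_coe.mpr h1
    push_cast at this
    linarith
  · have := NNReal.coe_le_coe.mpr h2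
    push_cast at this
    linarith

private lemma exists_partition (F : Finset (X →ᵇ ℝ≥0)) {δ : ℝ≥0} (hδ : 0 < δ) :
    ∃ (t : ℕ) (A : Fin t → Set X),
      (∀ i, MeasurableSet (A i)) ∧ (Pairwise fun i j => Disjoint (A i) (A j)) ∧
      (⋃ i, A i) = Set.univ ∧
      ∀ f ∈ F, ∀ i, ∃ c : ℝ≥0, ∀ x ∈ A i, f x ∈ Set.Icc c (c + δ) := by
  classical
  have hδR : (0 : ℝ) < δ := hδ
  obtain ⟨N, hfloor_lt⟩ : ∃ N : ℕ, ∀ f ∈ F, ∀ x : X, ⌊(f x : ℝ) / (δ : ℝ)⌋₊ < N + 1 := by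
    refine ⟨F.sup fun f => ⌊dist f 0 / (δ : ℝ)⌋₊, fun f hf x => ?_⟩
    have hfx : (f x : ℝ) ≤ dist f 0 := by
      have h := BoundedContinuousFunction.dist_coe_le_dist (f := f) (g := 0) x
      simpa [NNReal.dist_eq] using h
    have h1 : ⌊(f x : ℝ) / (δ : ℝ)⌋₊ ≤ ⌊dist f 0 / (δ : ℝ)⌋₊ :=
      Nat.floor_mono (by gcongr)
    exact Nat.lt_succ_of_le
      (h1.trans (Finset.le_sup (f := fun f => ⌊dist f 0 / (δ : ℝ)⌋₊) hf))
  let τ := ({f // f ∈ F} → Fin (N + 1))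
  let e : Fin (Fintype.card τ) ≃ τ := (Fintype.equivFin τ).symm
  refine ⟨Fintype.card τ,
    fun i => {x | ∀ f : {f // f ∈ F}, ⌊(f.1 x : ℝ) / (δ : ℝ)⌋₊ = (e i f : ℕ)}, ?_, ?_, ?_, ?_⟩
  · intro i
    have : {x | ∀ f : {f // f ∈ F}, ⌊(f.1 x : ℝ) / (δ : ℝ)⌋₊ = (e i f : ℕ)}
        = ⋂ f : {f // f ∈ F}, (fun x : X => ⌊(f.1 x : ℝ) / (δ : ℝ)⌋₊) ⁻¹' {(e i f : ℕ)} := by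
      ext x; simp
    show MeasurableSet {x | ∀ f : {f // f ∈ F}, ⌊(f.1 x : ℝ) / (δ : ℝ)⌋₊ = (e i f : ℕ)}
    rw [this]
    refine MeasurableSet.iInter fun f => ?_
    have hmf : Measurable fun x : X => ⌊(f.1 x : ℝ) / (δ : ℝ)⌋₊ := by
      apply Measurable.nat_floor
      exact ((NNReal.continuous_coe.comp f.1.continuous).div_const _).measurable
    exact hmf (MeasurableSet.singleton _)
  · intro i j hij
    refine Set.disjoint_left.mpr fun x hxi hxj => hij ?_
    have : e i = e j := by
      funext f
      exact Fin.ext ((hxi f).symm.trans (hxj f))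
    exact e.injective this
  · ext x
    simp only [Set.mem_iUnion, Set.mem_univ, iff_true]
    refine ⟨e.symm (fun f => ⟨⌊(f.1 x : ℝ) / (δ : ℝ)⌋₊, hfloor_lt f.1 f.2 x⟩), fun f => ?_⟩
    simp [e]
  · intro f hf i
    refine ⟨((e i ⟨f, hf⟩ : ℕ) : ℝ≥0) * δ, fun x hx => ?_⟩
    have hk : ⌊(f x : ℝ) / (δ : ℝ)⌋₊ = (e i ⟨f, hf⟩ : ℕ) := hx ⟨f, hf⟩
    set k : ℕ := (e i ⟨f, hf⟩ : ℕ)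
    have hnn : (0 : ℝ) ≤ (f x : ℝ) / (δ : ℝ) := by positivity
    have h1 : (k : ℝ) ≤ (f x : ℝ) / (δ : ℝ) := by
      rw [← hk]; exact Nat.floor_le hnn
    have h2 : (f x : ℝ) / (δ : ℝ) < k + 1 := by
      rw [← hk]; exact Nat.lt_floor_add_one _
    constructor
    · rw [← NNReal.coe_le_coe]
      push_cast
      calc (k : ℝ) * (δ : ℝ) ≤ ((f x : ℝ) / (δ : ℝ)) * δ := by gcongr
        _ = (f x : ℝ) := div_mul_cancel₀ _ hδR.ne'
    · rw [← NNReal.coe_le_coe]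
      push_cast
      calc (f x : ℝ) = ((f x : ℝ) / (δ : ℝ)) * δ := (div_mul_cancel₀ _ hδR.ne').symm
        _ ≤ ((k : ℝ) + 1) * δ := by gcongr
        _ = (k : ℝ) * δ + δ := by ring

end ClosurePartitionHelpers


/-- **Closure via finite partitions**: the closure of a set of pairs of Borel probability
measures in the product of the weak convergence topologies equals the intersection, over all
finite measurable partitions, of the closures of its partition-wise saturations. -/
theorem closure_eq_iInter_closure_partition
    {X : Type*} [TopologicalSpace X] [PolishSpace X] [MeasurableSpace X] [BorelSpace X]
    (Γ : Set (ProbabilityMeasure X × ProbabilityMeasure X)) :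
    closure Γ
      = ⋂ (t : ℕ), ⋂ (A : Fin t → Set X),
          ⋂ (_ : (∀ i, MeasurableSet (A i)) ∧ (Pairwise fun i j => Disjoint (A i) (A j))
            ∧ (⋃ i, A i) = Set.univ),
          closure {RS : ProbabilityMeasure X × ProbabilityMeasure X |
            ∃ RS' ∈ Γ, ∀ i, (RS.1 : Measure X) (A i) = (RS'.1 : Measure X) (A i)
              ∧ (RS.2 : Measure X) (A i) = (RS'.2 : Measure X) (A i)} := by
  classical
  apply Set.Subset.antisymm
  · refine Set.subset_iInter fun t => Set.subset_iInter fun A => Set.subset_iInter fun _ => ?_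
    exact closure_mono fun RS hRS => ⟨RS, hRS, fun i => ⟨rfl, rfl⟩⟩
  · intro RS hRS
    rw [mem_closure_iff_nhds]
    intro U hU
    obtain ⟨R, S⟩ := RS
    rw [nhds_prod_eq, Filter.mem_prod_iff] at hU
    obtain ⟨U1, hU1, U2, hU2, hU12⟩ := hU
    obtain ⟨F1, ε1, hε1, hsub1⟩ := nhds_sub R hU1
    obtain ⟨F2, ε2, hε2, hsub2⟩ := nhds_sub S hU2
    set ε : ℝ := min ε1 ε2 with hε
    have hεpos : 0 < ε := lt_min hε1 hε2
    set δ : ℝ≥0 := (ε / 3).toNNReal with hδ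
    have hδpos : 0 < δ := Real.toNNReal_pos.mpr (by linarith)
    have hδR : (δ : ℝ) = ε / 3 := Real.coe_toNNReal _ (by linarith)
    have hδRpos : (0 : ℝ) < (δ : ℝ) := by rw [hδR]; linarith
    obtain ⟨t, A, hmeas, hdisj, hcov, hosc⟩ := exists_partition (F1 ∪ F2) hδpos
    have hRSA : (R, S) ∈ closure {RS : ProbabilityMeasure X × ProbabilityMeasure X |
        ∃ RS' ∈ Γ, ∀ i, (RS.1 : Measure X) (A i) = (RS'.1 : Measure X) (A i)
          ∧ (RS.2 : Measure X) (A i) = (RS'.2 : Measure X) (A i)} := by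
      have h := hRS
      simp only [Set.mem_iInter] at h
      exact h t A ⟨hmeas, hdisj, hcov⟩
    have hW : ({Q : ProbabilityMeasure X | ∀ f ∈ F1 ∪ F2,
          dist (Q.toFiniteMeasure.testAgainstNN f) (R.toFiniteMeasure.testAgainstNN f) < (δ : ℝ)}
        ×ˢ {Q : ProbabilityMeasure X | ∀ f ∈ F1 ∪ F2,
          dist (Q.toFiniteMeasure.testAgainstNN f) (S.toFiniteMeasure.testAgainstNN f) < (δ : ℝ)})
        ∈ nhds (R, S) := by
      rw [nhds_prod_eq]
      exact Filter.prod_mem_prod (nhd_mem R _ hδRpos) (nhd_mem S _ hδRpos)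
    obtain ⟨⟨Rt, St⟩, hWmem, hmemA⟩ := mem_closure_iff_nhds.mp hRSA _ hW
    obtain ⟨⟨R', S'⟩, hΓ, hag⟩ := hmemA
    have hest1 : ∀ f ∈ F1 ∪ F2,
        dist (R'.toFiniteMeasure.testAgainstNN f) (Rt.toFiniteMeasure.testAgainstNN f) ≤ (δ : ℝ) := by
      intro f hf
      choose c hc using hosc f hf
      exact key_est hmeas hdisj hcov (fun i => ((hag i).1).symm) f hc
    have hest2 : ∀ f ∈ F1 ∪ F2,
        dist (S'.toFiniteMeasure.testAgainstNN f) (St.toFiniteMeasure.testAgainstNN f) ≤ (δ : ℝ) := by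
      intro f hf
      choose c hc using hosc f hf
      exact key_est hmeas hdisj hcov (fun i => ((hag i).2).symm) f hc
    have hmem1 : R' ∈ U1 := by
      refine hsub1 fun f hf => ?_
      have hf' : f ∈ F1 ∪ F2 := Finset.mem_union_left _ hf
      calc dist (R'.toFiniteMeasure.testAgainstNN f) (R.toFiniteMeasure.testAgainstNN f)
          ≤ dist (R'.toFiniteMeasure.testAgainstNN f) (Rt.toFiniteMeasure.testAgainstNN f)
            + dist (Rt.toFiniteMeasure.testAgainstNN f) (R.toFiniteMeasure.testAgainstNN f) :=
            dist_triangle _ _ _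
        _ < (δ : ℝ) + (δ : ℝ) := by
            have := hWmem.1 f hf'
            have h2 := hest1 f hf'
            exact add_lt_add_of_le_of_lt h2 this
        _ ≤ ε1 := by rw [hδR]; have : ε ≤ ε1 := min_le_left _ _; linarith
    have hmem2 : S' ∈ U2 := by
      refine hsub2 fun f hf => ?_
      have hf' : f ∈ F1 ∪ F2 := Finset.mem_union_right _ hf
      calc dist (S'.toFiniteMeasure.testAgainstNN f) (S.toFiniteMeasure.testAgainstNN f)
          ≤ dist (S'.toFiniteMeasure.testAgainstNN f) (St.toFiniteMeasure.testAgainstNN f)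
            + dist (St.toFiniteMeasure.testAgainstNN f) (S.toFiniteMeasure.testAgainstNN f) :=
            dist_triangle _ _ _
        _ < (δ : ℝ) + (δ : ℝ) := add_lt_add_of_le_of_lt (hest2 f hf') (hWmem.2 f hf')
        _ ≤ ε2 := by rw [hδR]; have : ε ≤ ε2 := min_le_right _ _; linarith
    exact ⟨(R', S'), hU12 (Set.mk_mem_prod hmem1 hmem2), hΓ⟩
end
end

section
/- Change-of-measure lower bound on acceptance probabilities: Let (X, Σ) be a measurable space and let P', P, Q be probability measures on X with P' ≪ P, P' ≪ Q, D(P'‖P) < ∞ and D(P'‖Q) < ∞. For ε > 0 and positive integers n, m, define A_n = { (x_1,…,x_n) ∈ X^n : | (1/n)·Σ_{i=1}^n log (dP'/dP)(x_i) − D(P'‖P) | ≤ ε } and B_m = { (y_1,…,y_m) ∈ X^m : | (1/m)·Σ_{j=1}^m log (dP'/dQ)(y_j) − D(P'‖Q) | ≤ ε }. Then for every measurable set C ⊆ A_n × B_m, (P^{⊗n} ⊗ Q^{⊗m})(C) ≥ exp( −n·(D(P'‖P) + ε) − m·(D(P'‖Q) + ε) ) · (P'^{⊗n} ⊗ P'^{⊗m})(C).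 -/
open MeasureTheory Filter Set
open scoped ENNReal NNReal

noncomputable section

lemma lintegral_pi_prod {X : Type*} [MeasurableSpace X] (μ : Measure X) [SigmaFinite μ] :
    ∀ (n : ℕ) (f : Fin n → X → ℝ≥0∞), (∀ i, Measurable (f i)) →
      ∫⁻ x, ∏ i, f i (x i) ∂(Measure.pi fun _ : Fin n => μ) = ∏ i, ∫⁻ y, f i y ∂μ := by
  intro n
  induction n with
  | zero =>
      intro f hf
      simp only [Finset.univ_eq_empty, Finset.prod_empty]
      rw [lintegral_one, Measure.pi_univ]
      simp
  | succ n ih =>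
      intro f hf
      have hmp : MeasurePreserving (MeasurableEquiv.piFinSuccAbove (fun _ : Fin (n+1) => X) 0)
          (Measure.pi fun _ => μ) (μ.prod (Measure.pi fun _ : Fin n => μ)) :=
        measurePreserving_piFinSuccAbove (fun _ => μ) 0
      have hG : Measurable (fun p : X × (Fin n → X) => f 0 p.1 * ∏ j, f j.succ (p.2 j)) := by
        apply Measurable.mul
        · exact (hf 0).comp measurable_fst
        · exact Finset.measurable_prod _ fun j _ =>
            (hf j.succ).comp ((measurable_pi_apply j).comp measurable_snd)
      have key : ∫⁻ x, ∏ i, f i (x i) ∂(Measure.pi fun _ : Fin (n+1) => μ)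
          = ∫⁻ p, f 0 p.1 * ∏ j, f j.succ (p.2 j) ∂(μ.prod (Measure.pi fun _ : Fin n => μ)) := by
        rw [← hmp.lintegral_comp hG]
        congr 1
        funext x
        have : (MeasurableEquiv.piFinSuccAbove (fun _ : Fin (n+1) => X) 0) x
            = (x 0, fun j => x j.succ) := by
          ext1
          · rfl
          · funext j; rfl
        rw [this]
        simp [Fin.prod_univ_succ]
      rw [key, lintegral_prod_mul (f := f 0) (g := fun z : Fin n → X => ∏ j, f j.succ (z j))
        (hf 0).aemeasurable
        (Finset.measurable_prod _ fun j _ =>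
          ((hf j.succ).comp (measurable_pi_apply j))).aemeasurable,
        ih _ fun j => hf j.succ, Fin.prod_univ_succ]

lemma pi_eq_withDensity {X : Type*} [MeasurableSpace X] (P' P : Measure X)
    [IsProbabilityMeasure P'] [IsProbabilityMeasure P] (h : P' ≪ P) (n : ℕ) :
    (Measure.pi fun _ : Fin n => P')
      = (Measure.pi fun _ : Fin n => P).withDensity fun x => ∏ i, P'.rnDeriv P (x i) := by
  refine Measure.pi_eq fun s hs => ?_
  rw [withDensity_apply _ (MeasurableSet.univ_pi hs),
    ← lintegral_indicator (MeasurableSet.univ_pi hs)]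
  have hind : (Set.pi Set.univ s).indicator (fun x : Fin n → X => ∏ i, P'.rnDeriv P (x i))
      = fun x => ∏ i, (s i).indicator (P'.rnDeriv P) (x i) := by
    funext x
    by_cases hx : x ∈ Set.pi Set.univ s
    · rw [Set.indicator_of_mem hx]
      exact Finset.prod_congr rfl fun i _ =>
        (Set.indicator_of_mem (hx i (Set.mem_univ i)) _).symm
    · rw [Set.indicator_of_notMem hx]
      rw [Set.mem_univ_pi, not_forall] at hx
      obtain ⟨i, hi⟩ := hx
      exact (Finset.prod_eq_zero (Finset.mem_univ i)
        (by rw [Set.indicator_of_notMem hi])).symm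
  rw [hind, lintegral_pi_prod P n _ fun i => (Measure.measurable_rnDeriv P' P).indicator (hs i)]
  exact Finset.prod_congr rfl fun i _ => by
    rw [lintegral_indicator (hs i), Measure.setLIntegral_rnDeriv h]

lemma real_le_exp_log {t : ℝ} (ht : 0 ≤ t) : t ≤ Real.exp (Real.log t) := by
  rcases ht.eq_or_lt with h | h
  · exact h ▸ (Real.exp_pos _).le
  · exact (Real.exp_log h).ge

lemma prod_rnDeriv_le {X : Type*} [MeasurableSpace X] (P' P : Measure X) {k : ℕ} {a : ℝ}
    (x : Fin k → X) (hfin : ∀ i, P'.rnDeriv P (x i) ≠ ⊤)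
    (hsum : ∑ i, llr P' P (x i) ≤ a) :
    ∏ i, P'.rnDeriv P (x i) ≤ ENNReal.ofReal (Real.exp a) := by
  calc ∏ i, P'.rnDeriv P (x i)
      = ∏ i, ENNReal.ofReal ((P'.rnDeriv P (x i)).toReal) :=
        Finset.prod_congr rfl fun i _ => (ENNReal.ofReal_toReal (hfin i)).symm
    _ = ENNReal.ofReal (∏ i, (P'.rnDeriv P (x i)).toReal) :=
        (ENNReal.ofReal_prod_of_nonneg fun i _ => ENNReal.toReal_nonneg).symm
    _ ≤ ENNReal.ofReal (Real.exp a) := by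
        apply ENNReal.ofReal_le_ofReal
        calc ∏ i, (P'.rnDeriv P (x i)).toReal
            ≤ ∏ i, Real.exp (Real.log ((P'.rnDeriv P (x i)).toReal)) :=
              Finset.prod_le_prod (fun i _ => ENNReal.toReal_nonneg)
                (fun i _ => real_le_exp_log ENNReal.toReal_nonneg)
          _ = Real.exp (∑ i, llr P' P (x i)) := by rw [Real.exp_sum]; rfl
          _ ≤ Real.exp a := Real.exp_le_exp.mpr hsum

lemma sum_llr_le {k : ℕ} (hk : 0 < k) {S D ε : ℝ} (h : |(1 / (k : ℝ)) * S - D| ≤ ε) :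
    S ≤ (k : ℝ) * (D + ε) := by
  have hk' : (0 : ℝ) < k := by exact_mod_cast hk
  have h1 : (1 / (k : ℝ)) * S ≤ D + ε := by linarith [(abs_le.mp h).2]
  have h2 : S = (k : ℝ) * ((1 / (k : ℝ)) * S) := by field_simp
  rw [h2]
  exact mul_le_mul_of_nonneg_left h1 hk'.le

lemma pi_ae_finite {X : Type*} [MeasurableSpace X] (P' P : Measure X)
    [IsProbabilityMeasure P'] [IsProbabilityMeasure P] (k : ℕ) :
    (Measure.pi fun _ : Fin k => P) {x | ¬ ∀ i, P'.rnDeriv P (x i) ≠ ⊤} = 0 := by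
  have hS : P {y | P'.rnDeriv P y = ⊤} = 0 := by
    have := Measure.rnDeriv_lt_top P' P
    rw [ae_iff] at this
    simpa [lt_top_iff_ne_top] using this
  have hsub : {x : Fin k → X | ¬ ∀ i, P'.rnDeriv P (x i) ≠ ⊤}
      ⊆ ⋃ i, Function.eval i ⁻¹' {y | P'.rnDeriv P y = ⊤} := by
    intro x hx
    rw [Set.mem_setOf_eq, not_forall] at hx
    obtain ⟨i, hi⟩ := hx
    rw [not_not] at hi
    exact Set.mem_iUnion.mpr ⟨i, hi⟩
  exact measure_mono_null hsub
    (measure_iUnion_null fun i => Measure.pi_eval_preimage_null (μ := fun _ : Fin k => P) hS)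

theorem change_of_measure_lower_bound' {D1 D2 : ℝ}
    {X : Type*} [MeasurableSpace X]
    (P' P Q : Measure X) [IsProbabilityMeasure P'] [IsProbabilityMeasure P]
    [IsProbabilityMeasure Q]
    (hPP : P' ≪ P) (hPQ : P' ≪ Q)
    (ε : ℝ) (hε : 0 < ε) (n m : ℕ) (hn : 0 < n) (hm : 0 < m)
    (C : Set ((Fin n → X) × (Fin m → X))) (hC_meas : MeasurableSet C)
    (hC_sub : C ⊆
      {x : Fin n → X |
          |(1 / (n : ℝ)) * ∑ i, llr P' P (x i) - D1| ≤ ε} ×ˢ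
        {y : Fin m → X |
          |(1 / (m : ℝ)) * ∑ j, llr P' Q (y j) - D2| ≤ ε}) :
    ((Measure.pi fun _ : Fin n => P).prod (Measure.pi fun _ : Fin m => Q)) C
      ≥ ENNReal.ofReal
          (Real.exp (-(n : ℝ) * (D1 + ε) - (m : ℝ) * (D2 + ε)))
        * ((Measure.pi fun _ : Fin n => P').prod (Measure.pi fun _ : Fin m => P')) C := by
  set μn := Measure.pi fun _ : Fin n => P with hμn
  set μm := Measure.pi fun _ : Fin m => Q with hμm
  set νn := Measure.pi fun _ : Fin n => P' with hνn
  set νm := Measure.pi fun _ : Fin m => P' with hνm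
  set gP : (Fin n → X) → ℝ≥0∞ := fun x => ∏ i, P'.rnDeriv P (x i) with hgP
  set gQ : (Fin m → X) → ℝ≥0∞ := fun y => ∏ j, P'.rnDeriv Q (y j) with hgQ
  have hgPm : Measurable gP :=
    Finset.measurable_prod _ fun i _ =>
      (Measure.measurable_rnDeriv P' P).comp (measurable_pi_apply i)
  have hgQm : Measurable gQ :=
    Finset.measurable_prod _ fun j _ =>
      (Measure.measurable_rnDeriv P' Q).comp (measurable_pi_apply j)
  have h1 : νn = μn.withDensity gP := pi_eq_withDensity P' P hPP n
  have h2 : νm = μm.withDensity gQ := pi_eq_withDensity P' Q hPQ m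
  -- product withDensity
  have hprod : νn.prod νm = (μn.prod μm).withDensity fun p => gP p.1 * gQ p.2 := by
    refine Measure.prod_eq fun s t hs ht => ?_
    rw [withDensity_apply _ (hs.prod ht), ← Measure.prod_restrict,
      lintegral_prod_mul hgPm.aemeasurable hgQm.aemeasurable,
      h1, h2, withDensity_apply _ hs, withDensity_apply _ ht]
  set a := (n : ℝ) * (D1 + ε) with ha
  set b := (m : ℝ) * (D2 + ε) with hb
  set K := ENNReal.ofReal (Real.exp (a + b)) with hK
  -- a.e. bound on C
  have hbound : ∀ᵐ p ∂(μn.prod μm), p ∈ C → gP p.1 * gQ p.2 ≤ K := by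
    have hfin : (μn.prod μm) {p : (Fin n → X) × (Fin m → X) |
        ¬ ((∀ i, P'.rnDeriv P (p.1 i) ≠ ⊤) ∧ ∀ j, P'.rnDeriv Q (p.2 j) ≠ ⊤)} = 0 := by
      have hsub : {p : (Fin n → X) × (Fin m → X) |
          ¬ ((∀ i, P'.rnDeriv P (p.1 i) ≠ ⊤) ∧ ∀ j, P'.rnDeriv Q (p.2 j) ≠ ⊤)}
          ⊆ ({x | ¬ ∀ i, P'.rnDeriv P (x i) ≠ ⊤} ×ˢ (Set.univ : Set (Fin m → X)))
            ∪ ((Set.univ : Set (Fin n → X)) ×ˢ {y | ¬ ∀ j, P'.rnDeriv Q (y j) ≠ ⊤}) := by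
        intro p hp
        rw [Set.mem_setOf_eq, not_and_or] at hp
        rcases hp with hp | hp
        · exact Or.inl ⟨hp, Set.mem_univ _⟩
        · exact Or.inr ⟨Set.mem_univ _, hp⟩
      refine measure_mono_null hsub (measure_union_null ?_ ?_)
      · rw [Measure.prod_prod, pi_ae_finite P' P n, zero_mul]
      · rw [Measure.prod_prod, pi_ae_finite P' Q m, mul_zero]
    rw [ae_iff]
    refine measure_mono_null ?_ hfin
    intro p hp
    rw [Set.mem_setOf_eq, _root_.not_imp] at hp
    obtain ⟨hpC, hple⟩ := hp
    rw [Set.mem_setOf_eq]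
    intro ⟨hf1, hf2⟩
    apply hple
    obtain ⟨hA, hB⟩ := hC_sub hpC
    have e1 : gP p.1 ≤ ENNReal.ofReal (Real.exp a) :=
      prod_rnDeriv_le P' P p.1 hf1 (sum_llr_le hn hA)
    have e2 : gQ p.2 ≤ ENNReal.ofReal (Real.exp b) :=
      prod_rnDeriv_le P' Q p.2 hf2 (sum_llr_le hm hB)
    calc gP p.1 * gQ p.2 ≤ ENNReal.ofReal (Real.exp a) * ENNReal.ofReal (Real.exp b) :=
          mul_le_mul' e1 e2
      _ = K := by rw [hK, ← ENNReal.ofReal_mul (Real.exp_pos a).le, ← Real.exp_add]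
  -- conclude
  have hν : (νn.prod νm) C = ∫⁻ p in C, gP p.1 * gQ p.2 ∂(μn.prod μm) := by
    rw [hprod, withDensity_apply _ hC_meas]
  have hle : (νn.prod νm) C ≤ K * (μn.prod μm) C := by
    rw [hν]
    calc ∫⁻ p in C, gP p.1 * gQ p.2 ∂(μn.prod μm)
        ≤ ∫⁻ _ in C, K ∂(μn.prod μm) :=
          lintegral_mono_ae ((ae_restrict_iff' hC_meas).mpr hbound)
      _ = K * (μn.prod μm) C := by rw [setLIntegral_const]
  have hexp : -(n : ℝ) * (D1 + ε) - (m : ℝ) * (D2 + ε) = -(a + b) := by rw [ha, hb]; ring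
  rw [hexp, ge_iff_le]
  calc ENNReal.ofReal (Real.exp (-(a + b))) * (νn.prod νm) C
      ≤ ENNReal.ofReal (Real.exp (-(a + b))) * (K * (μn.prod μm) C) := mul_le_mul_right hle _
    _ = (ENNReal.ofReal (Real.exp (-(a + b))) * K) * (μn.prod μm) C := (mul_assoc _ _ _).symm
    _ = (μn.prod μm) C := by
        rw [hK, ← ENNReal.ofReal_mul (Real.exp_pos _).le, ← Real.exp_add, neg_add_cancel,
          Real.exp_zero, ENNReal.ofReal_one, one_mul]

/-- **Change-of-measure lower bound on acceptance probabilities.** -/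
theorem change_of_measure_lower_bound
    {X : Type*} [MeasurableSpace X]
    (P' P Q : Measure X) [IsProbabilityMeasure P'] [IsProbabilityMeasure P]
    [IsProbabilityMeasure Q]
    (hPP : P' ≪ P) (hPQ : P' ≪ Q) (hKLP : KL P' P < ⊤) (hKLQ : KL P' Q < ⊤)
    (ε : ℝ) (hε : 0 < ε) (n m : ℕ) (hn : 0 < n) (hm : 0 < m)
    (C : Set ((Fin n → X) × (Fin m → X))) (hC_meas : MeasurableSet C)
    (hC_sub : C ⊆
      {x : Fin n → X |
          |(1 / (n : ℝ)) * ∑ i, llr P' P (x i) - (KL P' P).toReal| ≤ ε} ×ˢ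
        {y : Fin m → X |
          |(1 / (m : ℝ)) * ∑ j, llr P' Q (y j) - (KL P' Q).toReal| ≤ ε}) :
    ((Measure.pi fun _ : Fin n => P).prod (Measure.pi fun _ : Fin m => Q)) C
      ≥ ENNReal.ofReal
          (Real.exp (-(n : ℝ) * ((KL P' P).toReal + ε) - (m : ℝ) * ((KL P' Q).toReal + ε)))
        * ((Measure.pi fun _ : Fin n => P').prod (Measure.pi fun _ : Fin m => P')) C := by
  exact change_of_measure_lower_bound' P' P Q hPP hPQ ε hε n m hn hm C hC_meas hC_sub
end
end
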